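/- arXiv:2005.04548 — 8 statements merged into one kernel-verified Lean document; each statement's English description precedes it below -/
import Mathlib

section
/- Let V be a nontrivial finite-dimensional complex inner product space, let H₀ and W be self-adjoint linear operators on V, let ΔE > 0 and 0 ≤ b < 1/2. Assume: (i) Φ₀ is a unit vector with H₀Φ₀ = 0; (ii) every vector Ψ orthogonal to Φ₀ satisfies ⟨Ψ, H₀Ψ⟩ ≥ ΔE·‖Ψ‖² (so the kernel of H₀ is the line ℂΦ₀ and H₀ has spectral gap ΔE above its ground state); (iii) WΦ₀ = 0; (iv) ‖WΨ‖ ≤ b·‖H₀Ψ‖ for every Ψ ∈ V. Then the kernel of H := H₀ + W is exactly the one-dimensional subspace ℂΦ₀; in particular 0 is an eigenvalue of H with nondegenerate eigenvector Φ₀. -/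
/-- Uniqueness part of Proposition 5.1 (relatively bounded perturbations):
under the relative bound `‖WΨ‖ ≤ b‖H₀Ψ‖` with `0 ≤ b < 1/2`, the kernel of `H₀ + W` is
exactly the line `ℂ Φ₀` spanned by the ground state `Φ₀` of `H₀`. -/
theorem stability_ground_state_unique
    {V : Type*} [NormedAddCommGroup V] [InnerProductSpace ℂ V]
    [FiniteDimensional ℂ V] [Nontrivial V]
    (H₀ W : V →ₗ[ℂ] V) (hH₀sa : H₀.IsSymmetric) (hWsa : W.IsSymmetric)
    (ΔE b : ℝ) (hΔE : 0 < ΔE) (hb₀ : 0 ≤ b) (hb : b < 1 / 2)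
    (Φ₀ : V) (hΦ₀norm : ‖Φ₀‖ = 1) (hH₀Φ₀ : H₀ Φ₀ = 0)
    (hgap : ∀ Ψ : V, (inner ℂ Φ₀ Ψ : ℂ) = 0 → ΔE * ‖Ψ‖ ^ 2 ≤ (inner ℂ Ψ (H₀ Ψ) : ℂ).re)
    (hWΦ₀ : W Φ₀ = 0)
    (hrel : ∀ Ψ : V, ‖W Ψ‖ ≤ b * ‖H₀ Ψ‖) :
    LinearMap.ker (H₀ + W) = Submodule.span ℂ {Φ₀} := by
  apply le_antisymm
  · intro Ψ hΨ
    have hΨ0 : H₀ Ψ + W Ψ = 0 := by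
      simpa [LinearMap.mem_ker] using hΨ
    set c : ℂ := inner ℂ Φ₀ Ψ with hc
    set Ψp : V := Ψ - c • Φ₀ with hΨp
    have hself : (inner ℂ Φ₀ Φ₀ : ℂ) = 1 := by
      rw [inner_self_eq_norm_sq_to_K, hΦ₀norm]; norm_num
    have horth : (inner ℂ Φ₀ Ψp : ℂ) = 0 := by
      simp [hΨp, inner_sub_right, inner_smul_right, hself, hc, hΦ₀norm]
    have hHp : H₀ Ψp + W Ψp = 0 := by
      simp only [hΨp, map_sub, map_smul, hH₀Φ₀, hWΦ₀, smul_zero, sub_zero]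
      exact hΨ0
    have hHeq : H₀ Ψp = -(W Ψp) := eq_neg_of_add_eq_zero_left hHp
    have hnorm : ‖H₀ Ψp‖ ≤ b * ‖H₀ Ψp‖ := by
      calc ‖H₀ Ψp‖ = ‖W Ψp‖ := by rw [hHeq, norm_neg]
        _ ≤ b * ‖H₀ Ψp‖ := hrel Ψp
    have hH0p : H₀ Ψp = 0 := by
      by_contra h
      have hpos : 0 < ‖H₀ Ψp‖ := norm_pos_iff.mpr h
      nlinarith
    have hzero : Ψp = 0 := by
      have := hgap Ψp horth
      rw [hH0p] at this
      simp only [inner_zero_right, Complex.zero_re] at this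
      have h2 : ‖Ψp‖ = 0 := by
        by_contra h
        have hp : 0 < ‖Ψp‖ := (norm_nonneg _).lt_of_ne (Ne.symm h)
        nlinarith [mul_pos hΔE (pow_pos hp 2)]
      exact norm_eq_zero.mp h2
    have : Ψ = c • Φ₀ := by
      have := sub_eq_zero.mp hzero
      simpa [hΨp] using sub_eq_zero.mp hzero
    rw [this]
    exact Submodule.smul_mem _ _ (Submodule.mem_span_singleton_self Φ₀)
  · rw [Submodule.span_le]
    intro x hx
    simp only [Set.mem_singleton_iff] at hx
    subst hx
    simp [LinearMap.mem_ker, hH₀Φ₀, hWΦ₀]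
end

section
/- Let V be a nontrivial finite-dimensional complex inner product space, let H₀ and W be self-adjoint linear operators on V, let ΔE > 0 and b ≥ 0 with b/√(1−2b) ≤ 1/2 (in particular b < 1/2). Assume: (i) Φ₀ is a unit vector with H₀Φ₀ = 0; (ii) every vector Ψ orthogonal to Φ₀ satisfies ⟨Ψ, H₀Ψ⟩ ≥ ΔE·‖Ψ‖²; (iii) WΦ₀ = 0; (iv) ‖WΨ‖ ≤ b·‖H₀Ψ‖ for every Ψ ∈ V. Then every nonzero eigenvalue E of H := H₀ + W satisfies E ≥ (1 − b/√(1−2b))·ΔE. In other words, the spectral gap of H above the ground-state eigenvalue 0 is at least (1 − b/√(1−2b))·ΔE. -/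
open scoped InnerProductSpace

set_option maxHeartbeats 1000000

/-- Gap estimate of Proposition 5.1 (relatively bounded perturbations):
every nonzero eigenvalue `E` of `H = H₀ + W` satisfies
`E ≥ (1 − b/√(1−2b))·ΔE`. -/
theorem stability_spectral_gap
    {V : Type*} [NormedAddCommGroup V] [InnerProductSpace ℂ V]
    [FiniteDimensional ℂ V] [Nontrivial V]
    (H₀ W : V →ₗ[ℂ] V) (hH₀sa : H₀.IsSymmetric) (hWsa : W.IsSymmetric)
    (ΔE b : ℝ) (hΔE : 0 < ΔE) (hb₀ : 0 ≤ b)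
    (hb : b / Real.sqrt (1 - 2 * b) ≤ 1 / 2) (hb' : b < 1 / 2)
    (Φ₀ : V) (hΦ₀norm : ‖Φ₀‖ = 1) (hH₀Φ₀ : H₀ Φ₀ = 0)
    (hgap : ∀ Ψ : V, (inner ℂ Φ₀ Ψ : ℂ) = 0 → ΔE * ‖Ψ‖ ^ 2 ≤ (inner ℂ Ψ (H₀ Ψ) : ℂ).re)
    (hWΦ₀ : W Φ₀ = 0)
    (hrel : ∀ Ψ : V, ‖W Ψ‖ ≤ b * ‖H₀ Ψ‖) :
    ∀ E : ℝ, Module.End.HasEigenvalue (H₀ + W) (E : ℂ) → E ≠ 0 →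
      (1 - b / Real.sqrt (1 - 2 * b)) * ΔE ≤ E := by
  intro E hE hE0
  obtain ⟨Ψ, hΨ⟩ := hE.exists_hasEigenvector
  have hΨne : Ψ ≠ 0 := hΨ.2
  have hEΨ : (H₀ + W) Ψ = (E : ℂ) • Ψ := hΨ.apply_eq_smul
  have hn : (0:ℝ) < ‖Ψ‖ := norm_pos_iff.mpr hΨne
  -- orthogonality of Ψ to Φ₀
  have horth : (inner ℂ Φ₀ Ψ : ℂ) = 0 := by
    have h1 : (inner ℂ Φ₀ ((H₀ + W) Ψ) : ℂ) = 0 := by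
      have e1 : (inner ℂ Φ₀ (H₀ Ψ) : ℂ) = 0 := by
        rw [← hH₀sa Φ₀ Ψ, hH₀Φ₀, inner_zero_left]
      have e2 : (inner ℂ Φ₀ (W Ψ) : ℂ) = 0 := by
        rw [← hWsa Φ₀ Ψ, hWΦ₀, inner_zero_left]
      simp [LinearMap.add_apply, inner_add_right, e1, e2]
    rw [hEΨ, inner_smul_right] at h1
    have hEc : (E : ℂ) ≠ 0 := by exact_mod_cast hE0
    exact (mul_eq_zero.mp h1).resolve_left hEc
  have hgapΨ := hgap Ψ horth
  -- energy identity
  have henergy : (inner ℂ Ψ (H₀ Ψ) : ℂ).re + (inner ℂ Ψ (W Ψ) : ℂ).re = E * ‖Ψ‖ ^ 2 := by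
    have h0 : (inner ℂ Ψ ((H₀ + W) Ψ) : ℂ).re
        = (inner ℂ Ψ (H₀ Ψ) : ℂ).re + (inner ℂ Ψ (W Ψ) : ℂ).re := by
      simp [LinearMap.add_apply, inner_add_right]
    have h1 : (inner ℂ Ψ ((H₀ + W) Ψ) : ℂ).re = E * ‖Ψ‖ ^ 2 := by
      rw [hEΨ, inner_smul_right, Complex.mul_re, Complex.ofReal_re, Complex.ofReal_im]
      have hre : (inner ℂ Ψ Ψ : ℂ).re = ‖Ψ‖ ^ 2 := by
        simpa using inner_self_eq_norm_sq (𝕜 := ℂ) Ψ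
      have him : (inner ℂ Ψ Ψ : ℂ).im = 0 := by
        rw [← RCLike.im_to_complex]; exact inner_self_im Ψ
      rw [hre, him]; ring
    linarith [h0, h1]
  -- bound on the W term
  have hW1 : |(inner ℂ Ψ (W Ψ) : ℂ).re| ≤ ‖Ψ‖ * (b * ‖H₀ Ψ‖) := by
    calc |(inner ℂ Ψ (W Ψ) : ℂ).re| ≤ ‖(inner ℂ Ψ (W Ψ) : ℂ)‖ := Complex.abs_re_le_norm _
      _ ≤ ‖Ψ‖ * ‖W Ψ‖ := norm_inner_le_norm _ _
      _ ≤ ‖Ψ‖ * (b * ‖H₀ Ψ‖) := by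
          exact mul_le_mul_of_nonneg_left (hrel Ψ) hn.le
  -- norm estimate: (1-2b)‖H₀Ψ‖² ≤ E²‖Ψ‖²
  have hnorm : (1 - 2*b) * ‖H₀ Ψ‖ ^ 2 ≤ E ^ 2 * ‖Ψ‖ ^ 2 := by
    have h1 : ‖(H₀ + W) Ψ‖ = |E| * ‖Ψ‖ := by
      rw [hEΨ, norm_smul]
      simp
    have h2 : ‖H₀ Ψ + W Ψ‖ ^ 2 = ‖H₀ Ψ‖ ^ 2 + 2 * (inner ℂ (H₀ Ψ) (W Ψ) : ℂ).re + ‖W Ψ‖ ^ 2 := by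
      exact_mod_cast norm_add_sq (𝕜 := ℂ) (H₀ Ψ) (W Ψ)
    have h3 : |(inner ℂ (H₀ Ψ) (W Ψ) : ℂ).re| ≤ b * ‖H₀ Ψ‖ ^ 2 := by
      calc |(inner ℂ (H₀ Ψ) (W Ψ) : ℂ).re| ≤ ‖(inner ℂ (H₀ Ψ) (W Ψ) : ℂ)‖ := Complex.abs_re_le_norm _
        _ ≤ ‖H₀ Ψ‖ * ‖W Ψ‖ := norm_inner_le_norm _ _
        _ ≤ ‖H₀ Ψ‖ * (b * ‖H₀ Ψ‖) := mul_le_mul_of_nonneg_left (hrel Ψ) (norm_nonneg _)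
        _ = b * ‖H₀ Ψ‖ ^ 2 := by ring
    have h4 : ‖(H₀ + W) Ψ‖ ^ 2 = ‖H₀ Ψ + W Ψ‖ ^ 2 := by simp [LinearMap.add_apply]
    have h5 : (|E| * ‖Ψ‖) ^ 2 = E ^ 2 * ‖Ψ‖ ^ 2 := by rw [mul_pow, sq_abs]
    have h6 : ‖H₀ Ψ + W Ψ‖ ^ 2 = E ^ 2 * ‖Ψ‖ ^ 2 := by rw [← h4, h1, h5]
    nlinarith [abs_le.mp h3, sq_nonneg (‖W Ψ‖)]
  -- set s := √(1-2b)
  set s := Real.sqrt (1 - 2*b) with hs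
  have hs2 : s ^ 2 = 1 - 2*b := Real.sq_sqrt (by linarith)
  have hspos : 0 < s := Real.sqrt_pos.mpr (by linarith)
  -- s ‖H₀Ψ‖ ≤ |E| ‖Ψ‖
  have hsb : s * ‖H₀ Ψ‖ ≤ |E| * ‖Ψ‖ := by
    have h1 : (s * ‖H₀ Ψ‖) ^ 2 ≤ (|E| * ‖Ψ‖) ^ 2 := by
      rw [mul_pow, mul_pow, hs2, sq_abs]; exact hnorm
    have h2 := Real.sqrt_le_sqrt h1
    rwa [Real.sqrt_sq (by positivity), Real.sqrt_sq (by positivity)] at h2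
  -- b ‖H₀Ψ‖ ≤ (b/s) |E| ‖Ψ‖
  have hbH : b * ‖H₀ Ψ‖ ≤ (b / s) * (|E| * ‖Ψ‖) := by
    have : b * ‖H₀ Ψ‖ = (b / s) * (s * ‖H₀ Ψ‖) := by field_simp
    rw [this]
    exact mul_le_mul_of_nonneg_left hsb (by positivity)
  have hc0 : 0 ≤ b / s := by positivity
  -- main inequality: ΔE ≤ E + (b/s)|E|
  have hmain : ΔE * ‖Ψ‖ ^ 2 ≤ E * ‖Ψ‖ ^ 2 + (b / s) * |E| * ‖Ψ‖ ^ 2 := by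
    have h1 : (inner ℂ Ψ (H₀ Ψ) : ℂ).re ≤ E * ‖Ψ‖ ^ 2 + ‖Ψ‖ * (b * ‖H₀ Ψ‖) := by
      nlinarith [abs_le.mp hW1]
    have h2 : ‖Ψ‖ * (b * ‖H₀ Ψ‖) ≤ (b / s) * |E| * ‖Ψ‖ ^ 2 := by
      nlinarith [mul_le_mul_of_nonneg_left hbH hn.le]
    linarith [hgapΨ]
  have hdiv : ΔE ≤ E + (b / s) * |E| := by
    have h2 : (0:ℝ) < ‖Ψ‖ ^ 2 := by positivity
    have hmain' : ΔE * ‖Ψ‖ ^ 2 ≤ (E + (b / s) * |E|) * ‖Ψ‖ ^ 2 := by nlinarith [hmain]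
    exact le_of_mul_le_mul_right hmain' h2
  rcases le_or_gt 0 E with hE1 | hE1
  · rw [abs_of_nonneg hE1] at hdiv
    nlinarith [mul_le_mul_of_nonneg_left hdiv (show (0:ℝ) ≤ 1 - b / s by linarith),
      mul_nonneg (mul_nonneg hc0 hc0) hE1]
  · rw [abs_of_neg hE1] at hdiv
    have h := mul_le_mul_of_nonneg_right hb (show (0:ℝ) ≤ -E by linarith)
    linarith
end

section
/- Let H₀ and W be bounded self-adjoint operators on a complex Hilbert space and let 0 ≤ b < 1/2 be such that ‖WΨ‖ ≤ b·‖H₀Ψ‖ for every Ψ. Suppose Ψ₁ is a unit vector with (H₀ + W)Ψ₁ = E₁·Ψ₁ for some real number E₁. Then ‖H₀Ψ₁‖² ≤ E₁²/(1−2b), and consequently ‖E₁·Ψ₁ − H₀Ψ₁‖² ≤ (b²/(1−2b))·E₁². -/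
/-- Key eigenvector estimate in the proof of Proposition 5.1:
if `(H₀ + W)Ψ₁ = E₁ Ψ₁` with `Ψ₁` a unit vector and `‖WΨ‖ ≤ b‖H₀Ψ‖` for all `Ψ`
with `0 ≤ b < 1/2`, then `‖H₀Ψ₁‖² ≤ E₁²/(1−2b)` and
`‖E₁Ψ₁ − H₀Ψ₁‖² ≤ (b²/(1−2b))E₁²`. -/
theorem eigenvector_relative_bound_estimate
    {H : Type*} [NormedAddCommGroup H] [InnerProductSpace ℂ H] [CompleteSpace H]
    (H₀ W : H →L[ℂ] H) (hH₀sa : IsSelfAdjoint H₀) (hWsa : IsSelfAdjoint W)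
    (b : ℝ) (hb₀ : 0 ≤ b) (hb : b < 1 / 2)
    (hrel : ∀ Ψ : H, ‖W Ψ‖ ≤ b * ‖H₀ Ψ‖)
    (Ψ₁ : H) (hΨ₁ : ‖Ψ₁‖ = 1) (E₁ : ℝ)
    (heig : (H₀ + W) Ψ₁ = (E₁ : ℂ) • Ψ₁) :
    ‖H₀ Ψ₁‖ ^ 2 ≤ E₁ ^ 2 / (1 - 2 * b) ∧
      ‖(E₁ : ℂ) • Ψ₁ - H₀ Ψ₁‖ ^ 2 ≤ b ^ 2 / (1 - 2 * b) * E₁ ^ 2 := by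
  have h2b : 0 < 1 - 2 * b := by linarith
  have hadd : H₀ Ψ₁ + W Ψ₁ = (E₁ : ℂ) • Ψ₁ := by
    simpa [ContinuousLinearMap.add_apply] using heig
  have hWeq : W Ψ₁ = (E₁ : ℂ) • Ψ₁ - H₀ Ψ₁ := eq_sub_of_add_eq' hadd
  have hH0eq : H₀ Ψ₁ = (E₁ : ℂ) • Ψ₁ - W Ψ₁ := eq_sub_of_add_eq hadd
  have hE : ‖(E₁ : ℂ) • Ψ₁‖ = |E₁| := by
    rw [norm_smul, Complex.norm_real, Real.norm_eq_abs, hΨ₁, mul_one]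
  set x := ‖H₀ Ψ₁‖ with hx
  have hxnn : 0 ≤ x := norm_nonneg _
  have hx1 : x ≤ |E₁| + b * x := by
    calc x = ‖(E₁ : ℂ) • Ψ₁ - W Ψ₁‖ := by rw [hx, hH0eq]
    _ ≤ ‖(E₁ : ℂ) • Ψ₁‖ + ‖W Ψ₁‖ := norm_sub_le _ _
    _ ≤ |E₁| + b * x := by rw [hE]; exact add_le_add_right (hrel Ψ₁) _
  have hx2 : x * (1 - b) ≤ |E₁| := by linarith
  have hsq : (x * (1 - b)) ^ 2 ≤ |E₁| ^ 2 := by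
    exact pow_le_pow_left₀ (mul_nonneg hxnn (by linarith)) hx2 2
  have hE2 : |E₁| ^ 2 = E₁ ^ 2 := sq_abs E₁
  have h1 : x ^ 2 ≤ E₁ ^ 2 / (1 - 2 * b) := by
    rw [le_div_iff₀ h2b]
    nlinarith [sq_nonneg (b * x)]
  refine ⟨h1, ?_⟩
  have hW2 : ‖(E₁ : ℂ) • Ψ₁ - H₀ Ψ₁‖ ≤ b * x := by
    rw [← hWeq]; exact hrel Ψ₁
  calc ‖(E₁ : ℂ) • Ψ₁ - H₀ Ψ₁‖ ^ 2 ≤ (b * x) ^ 2 := by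
        apply pow_le_pow_left₀ (norm_nonneg _) hW2
   _ = b ^ 2 * x ^ 2 := by ring
   _ ≤ b ^ 2 * (E₁ ^ 2 / (1 - 2 * b)) := by nlinarith [sq_nonneg b]
   _ = b ^ 2 / (1 - 2 * b) * E₁ ^ 2 := by ring
end

section
/- Let H be a complex Hilbert space, Λ a finite set, and (q_x)_{x∈Λ} a family of pairwise commuting orthogonal projections (bounded self-adjoint idempotent operators) on H. Let 𝒳 be a finite collection of nonempty subsets of Λ, and for each X ∈ 𝒳 let W_X be a bounded self-adjoint operator on H such that: (i) W_X commutes with q_y for every y ∉ X; (ii) W_X·P_X = 0 and P_X·W_X = 0, where P_X := ∏_{x∈X}(1 − q_x) (the factors commute, so the product is order-independent). Let g ≥ 0 satisfy Σ_{X∈𝒳, x∈X} |X|·‖W_X‖ ≤ g for every x ∈ Λ, where |X| is the cardinality of X. Then, setting W := Σ_{X∈𝒳} W_X and N := Σ_{x∈Λ} q_x, one has ‖WΨ‖ ≤ g·‖NΨ‖ for every Ψ ∈ H. -/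
set_option linter.unusedSectionVars false
set_option linter.unusedVariables false
set_option maxHeartbeats 1000000


open scoped BigOperators


/-- The local ground-state projection `P_X = ∏_{x ∈ X} (1 − q_x)`, defined as a
`noncommProd` over the finite set `X`; the factors pairwise commute since the
projections `q_x` do. -/
noncomputable def groundProjection {H : Type*} [NormedAddCommGroup H]
    [InnerProductSpace ℂ H] [CompleteSpace H] {Λ : Type*}
    (q : Λ → H →L[ℂ] H) (hq_comm : ∀ x y, Commute (q x) (q y))
    (X : Finset Λ) : H →L[ℂ] H :=
  X.noncommProd (fun x => 1 - q x)
    (fun a _ b _ _ =>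
      (Commute.one_left (1 - q b)).sub_left
        ((Commute.one_right (q a)).sub_right (hq_comm a b)))

namespace RelBoundAux

local notation "⟪" x ", " y "⟫" => @inner ℂ _ _ x y

variable {H : Type*} [NormedAddCommGroup H] [InnerProductSpace ℂ H] [CompleteSpace H]
variable {Λ : Type*} [Fintype Λ] [DecidableEq Λ]

/-- The factor of the joint spectral projection. -/
noncomputable def pfac (q : Λ → H →L[ℂ] H) (σ : Finset Λ) (x : Λ) : H →L[ℂ] H :=
  if x ∈ σ then q x else 1 - q x

lemma pfac_comm (q : Λ → H →L[ℂ] H) (hq_comm : ∀ x y, Commute (q x) (q y))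
    (σ τ : Finset Λ) (x y : Λ) : Commute (pfac q σ x) (pfac q τ y) := by
  have h := hq_comm x y
  unfold pfac
  split_ifs
  · exact h
  · exact (Commute.one_right (q x)).sub_right h
  · exact (Commute.one_left (q y)).sub_left h
  · exact (Commute.one_left (1 - q y)).sub_left ((Commute.one_right (q x)).sub_right h)

/-- Joint spectral projection over `s` for the configuration `σ`. -/
noncomputable def Es (q : Λ → H →L[ℂ] H) (hq_comm : ∀ x y, Commute (q x) (q y))
    (s σ : Finset Λ) : H →L[ℂ] H :=
  s.noncommProd (pfac q σ) (fun a _ b _ _ => pfac_comm q hq_comm σ σ a b)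

lemma Es_empty (q : Λ → H →L[ℂ] H) (hq_comm : ∀ x y, Commute (q x) (q y)) (σ : Finset Λ) :
    Es q hq_comm ∅ σ = 1 := rfl

lemma Es_insert (q : Λ → H →L[ℂ] H) (hq_comm : ∀ x y, Commute (q x) (q y))
    {a : Λ} {s : Finset Λ} (ha : a ∉ s) (σ : Finset Λ) :
    Es q hq_comm (insert a s) σ = pfac q σ a * Es q hq_comm s σ :=
  Finset.noncommProd_insert_of_notMem s a _ _ ha

lemma commute_Es (q : Λ → H →L[ℂ] H) (hq_comm : ∀ x y, Commute (q x) (q y))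
    (A : H →L[ℂ] H) (hA : ∀ x, Commute A (q x)) (s σ : Finset Λ) :
    Commute A (Es q hq_comm s σ) := by
  refine Finset.noncommProd_commute _ _ _ _ (fun y _ => ?_)
  unfold pfac
  split_ifs
  · exact hA y
  · exact (Commute.one_right A).sub_right (hA y)

lemma commute_q_Es (q : Λ → H →L[ℂ] H) (hq_comm : ∀ x y, Commute (q x) (q y))
    (x : Λ) (s σ : Finset Λ) : Commute (q x) (Es q hq_comm s σ) :=
  commute_Es q hq_comm (q x) (fun y => hq_comm x y) s σ

lemma pfac_idem (q : Λ → H →L[ℂ] H) (hq_idem : ∀ x, q x * q x = q x) (σ : Finset Λ) (x : Λ) :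
    pfac q σ x * pfac q σ x = pfac q σ x := by
  unfold pfac
  split_ifs
  · exact hq_idem x
  · rw [mul_sub, mul_one, sub_mul, one_mul, hq_idem, sub_self, sub_zero]

lemma q_mul_Es (q : Λ → H →L[ℂ] H) (hq_comm : ∀ x y, Commute (q x) (q y))
    (hq_idem : ∀ x, q x * q x = q x) {s : Finset Λ} {x : Λ} (hx : x ∈ s) (σ : Finset Λ) :
    q x * Es q hq_comm s σ = if x ∈ σ then Es q hq_comm s σ else 0 := by
  have hrw : Es q hq_comm s σ = pfac q σ x * Es q hq_comm (s.erase x) σ :=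
    (Finset.mul_noncommProd_erase s hx _ _).symm
  rw [hrw, ← mul_assoc]
  by_cases hσ : x ∈ σ
  · have : pfac q σ x = q x := if_pos hσ
    rw [this, if_pos hσ, hq_idem]
  · have : pfac q σ x = 1 - q x := if_neg hσ
    rw [this, if_neg hσ, mul_sub, mul_one, hq_idem, sub_self, zero_mul]

/-- The joint spectral projection `E σ` over the whole lattice. -/
noncomputable def Eu (q : Λ → H →L[ℂ] H) (hq_comm : ∀ x y, Commute (q x) (q y))
    (σ : Finset Λ) : H →L[ℂ] H :=
  Es q hq_comm Finset.univ σ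

lemma q_mul_Eu (q : Λ → H →L[ℂ] H) (hq_comm : ∀ x y, Commute (q x) (q y))
    (hq_idem : ∀ x, q x * q x = q x) (x : Λ) (σ : Finset Λ) :
    q x * Eu q hq_comm σ = if x ∈ σ then Eu q hq_comm σ else 0 :=
  q_mul_Es q hq_comm hq_idem (Finset.mem_univ x) σ

lemma Eu_mul_q (q : Λ → H →L[ℂ] H) (hq_comm : ∀ x y, Commute (q x) (q y))
    (hq_idem : ∀ x, q x * q x = q x) (x : Λ) (σ : Finset Λ) :
    Eu q hq_comm σ * q x = if x ∈ σ then Eu q hq_comm σ else 0 := by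
  unfold Eu
  rw [← (commute_q_Es q hq_comm x Finset.univ σ).eq]
  exact q_mul_Es q hq_comm hq_idem (Finset.mem_univ x) σ

lemma Eu_mul_Eu_of_ne (q : Λ → H →L[ℂ] H) (hq_comm : ∀ x y, Commute (q x) (q y))
    (hq_idem : ∀ x, q x * q x = q x) {σ τ : Finset Λ} (hne : σ ≠ τ) :
    Eu q hq_comm σ * Eu q hq_comm τ = 0 := by
  have h' : ¬∀ a, a ∈ σ ↔ a ∈ τ := fun h => hne (Finset.ext h)
  obtain ⟨x, hx⟩ := not_forall.mp h'
  by_cases hσ : x ∈ σ <;> by_cases hτ : x ∈ τ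
  · exact absurd (iff_of_true hσ hτ) hx
  · calc Eu q hq_comm σ * Eu q hq_comm τ
        = (Eu q hq_comm σ * q x) * Eu q hq_comm τ := by
          rw [Eu_mul_q q hq_comm hq_idem, if_pos hσ]
      _ = Eu q hq_comm σ * (q x * Eu q hq_comm τ) := by rw [mul_assoc]
      _ = 0 := by rw [q_mul_Eu q hq_comm hq_idem, if_neg hτ, mul_zero]
  · calc Eu q hq_comm σ * Eu q hq_comm τ
        = Eu q hq_comm σ * (q x * Eu q hq_comm τ) := by
          rw [q_mul_Eu q hq_comm hq_idem, if_pos hτ]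
      _ = (Eu q hq_comm σ * q x) * Eu q hq_comm τ := by rw [mul_assoc]
      _ = 0 := by rw [Eu_mul_q q hq_comm hq_idem, if_neg hσ, zero_mul]
  · exact absurd (iff_of_false hσ hτ) hx

lemma sum_Es (q : Λ → H →L[ℂ] H) (hq_comm : ∀ x y, Commute (q x) (q y))
    (s : Finset Λ) : ∑ σ ∈ s.powerset, Es q hq_comm s σ = 1 := by
  induction s using Finset.induction_on with
  | empty => simp [Es_empty]
  | insert a s ha ih =>
    rw [Finset.powerset_insert, Finset.sum_union]
    · have h1 : ∀ σ ∈ s.powerset, Es q hq_comm (insert a s) σ = (1 - q a) * Es q hq_comm s σ := by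
        intro σ hσ
        rw [Es_insert q hq_comm ha]
        have haσ : a ∉ σ := fun h => ha (Finset.mem_powerset.mp hσ h)
        rw [show pfac q σ a = 1 - q a from if_neg haσ]
      have hinj : ∀ σ1 ∈ s.powerset, ∀ σ2 ∈ s.powerset, insert a σ1 = insert a σ2 → σ1 = σ2 := by
        intro σ1 h1' σ2 h2' heq
        have ha1 : a ∉ σ1 := fun h => ha (Finset.mem_powerset.mp h1' h)
        have ha2 : a ∉ σ2 := fun h => ha (Finset.mem_powerset.mp h2' h)
        rw [← Finset.erase_insert ha1, ← Finset.erase_insert ha2, heq]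
      rw [Finset.sum_image hinj]
      have h2 : ∀ σ ∈ s.powerset,
          Es q hq_comm (insert a s) (insert a σ) = q a * Es q hq_comm s σ := by
        intro σ hσ
        have haσ : a ∉ σ := fun h => ha (Finset.mem_powerset.mp hσ h)
        rw [Es_insert q hq_comm ha]
        have : pfac q (insert a σ) a = q a := if_pos (Finset.mem_insert_self a σ)
        rw [this]
        congr 1
        have hfac : ∀ x ∈ s, pfac q (insert a σ) x = pfac q σ x := by
          intro x hx
          have hxa : x ≠ a := fun h => ha (h ▸ hx)
          unfold pfac
          simp [Finset.mem_insert, hxa]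
        exact Finset.noncommProd_congr rfl hfac _
      rw [Finset.sum_congr rfl h1, Finset.sum_congr rfl h2, ← Finset.sum_add_distrib]
      have hcomb : ∀ σ ∈ s.powerset,
          (1 - q a) * Es q hq_comm s σ + q a * Es q hq_comm s σ = Es q hq_comm s σ := by
        intro σ _
        rw [← add_mul, sub_add_cancel, one_mul]
      rw [Finset.sum_congr rfl hcomb, ih]
    · rw [Finset.disjoint_right]
      intro τ hτ hτ'
      obtain ⟨σ, hσ, rfl⟩ := Finset.mem_image.mp hτ
      exact ha (Finset.mem_powerset.mp hτ' (Finset.mem_insert_self a σ))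

lemma sum_Eu (q : Λ → H →L[ℂ] H) (hq_comm : ∀ x y, Commute (q x) (q y)) :
    ∑ σ : Finset Λ, Eu q hq_comm σ = 1 := by
  rw [← Finset.powerset_univ]
  exact sum_Es q hq_comm Finset.univ

lemma Es_sa (q : Λ → H →L[ℂ] H) (hq_comm : ∀ x y, Commute (q x) (q y))
    (hq_sa : ∀ x, IsSelfAdjoint (q x)) (s σ : Finset Λ) :
    IsSelfAdjoint (Es q hq_comm s σ) := by
  induction s using Finset.induction_on with
  | empty => rw [Es_empty]; exact .one _
  | insert a s ha ih =>
    rw [Es_insert q hq_comm ha]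
    have hf : IsSelfAdjoint (pfac q σ a) := by
      unfold pfac
      split_ifs
      · exact hq_sa a
      · exact (IsSelfAdjoint.one _).sub (hq_sa a)
    have hc : Commute (pfac q σ a) (Es q hq_comm s σ) :=
      Finset.noncommProd_commute _ _ _ _ (fun y _ => pfac_comm q hq_comm σ σ a y)
    rw [IsSelfAdjoint, star_mul, ih.star_eq, hf.star_eq, hc.eq]

lemma commute_ground_q (q : Λ → H →L[ℂ] H) (hq_comm : ∀ x y, Commute (q x) (q y))
    (X : Finset Λ) (y : Λ) : Commute (groundProjection q hq_comm X) (q y) :=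
  (Finset.noncommProd_commute _ _ _ _
    (fun x _ => (Commute.one_right (q y)).sub_right (hq_comm y x))).symm

lemma commute_ground_Eu (q : Λ → H →L[ℂ] H) (hq_comm : ∀ x y, Commute (q x) (q y))
    (X σ : Finset Λ) : Commute (groundProjection q hq_comm X) (Eu q hq_comm σ) :=
  commute_Es q hq_comm _ (commute_ground_q q hq_comm X) Finset.univ σ

lemma ground_mul_Eu (q : Λ → H →L[ℂ] H) (hq_comm : ∀ x y, Commute (q x) (q y))
    (hq_idem : ∀ x, q x * q x = q x) (X σ : Finset Λ) (hdis : ∀ x ∈ X, x ∉ σ) :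
    groundProjection q hq_comm X * Eu q hq_comm σ = Eu q hq_comm σ := by
  induction X using Finset.induction_on with
  | empty =>
    rw [show groundProjection q hq_comm ∅ = 1 from rfl, one_mul]
  | insert a X ha ih =>
    have hga : groundProjection q hq_comm (insert a X)
        = (1 - q a) * groundProjection q hq_comm X :=
      Finset.noncommProd_insert_of_notMem _ _ _ _ ha
    rw [hga, mul_assoc, ih (fun x hx => hdis x (Finset.mem_insert_of_mem hx)), sub_mul, one_mul,
      q_mul_Eu q hq_comm hq_idem, if_neg (hdis a (Finset.mem_insert_self a X)), sub_zero]

lemma Eu_mul_ground (q : Λ → H →L[ℂ] H) (hq_comm : ∀ x y, Commute (q x) (q y))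
    (hq_idem : ∀ x, q x * q x = q x) (X σ : Finset Λ) (hdis : ∀ x ∈ X, x ∉ σ) :
    Eu q hq_comm σ * groundProjection q hq_comm X = Eu q hq_comm σ := by
  rw [← (commute_ground_Eu q hq_comm X σ).eq]
  exact ground_mul_Eu q hq_comm hq_idem X σ hdis

/-- selfadjoint operators move across the inner product -/
lemma isSelfAdjoint_inner_move {A : H →L[ℂ] H} (hA : IsSelfAdjoint A) (x y : H) :
    ⟪A x, y⟫ = ⟪x, A y⟫ :=
  hA.isSymmetric x y

lemma norm_sq_sum_ortho {ι : Type*} (s : Finset ι) (w : ι → H)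
    (h : ∀ i ∈ s, ∀ j ∈ s, i ≠ j → ⟪w i, w j⟫ = 0) :
    ‖∑ i ∈ s, w i‖ ^ 2 = ∑ i ∈ s, ‖w i‖ ^ 2 := by
  have key : (⟪∑ i ∈ s, w i, ∑ j ∈ s, w j⟫ : ℂ) = ∑ i ∈ s, ⟪w i, w i⟫ := by
    rw [sum_inner]
    refine Finset.sum_congr rfl (fun i hi => ?_)
    rw [inner_sum]
    exact Finset.sum_eq_single i (fun j hj hne => h i hi j hj (Ne.symm hne))
      (fun hni => absurd hi hni)
  have h1 : (‖∑ i ∈ s, w i‖ : ℝ)^2 = RCLike.re (⟪∑ i ∈ s, w i, ∑ j ∈ s, w j⟫ : ℂ) :=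
    (inner_self_eq_norm_sq _).symm
  rw [h1, key, map_sum]
  exact Finset.sum_congr rfl (fun i _ => inner_self_eq_norm_sq (w i))

lemma block_reindex {M : Type*} [AddCommMonoid M] (X : Finset Λ) (f : Finset Λ → Finset Λ → M) :
    ∑ ρ : Finset Λ, ∑ τ ∈ Finset.univ.filter (fun τ => τ \ X = ρ ∧ (τ ∩ X).Nonempty), f ρ τ
      = ∑ τ ∈ Finset.univ.filter (fun τ => (τ ∩ X).Nonempty), f (τ \ X) τ := by
  simp only [Finset.sum_filter]
  rw [Finset.sum_comm]
  refine Finset.sum_congr rfl (fun τ _ => ?_)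
  rw [Finset.sum_eq_single (τ \ X)]
  · by_cases h : (τ ∩ X).Nonempty
    · simp [h]
    · simp [h]
  · intro ρ _ hne
    rw [if_neg]
    rintro ⟨h1, _⟩
    exact hne h1.symm
  · intro h; exact absurd (Finset.mem_univ _) h

lemma amgm_half (L a b : ℝ) (hL : 0 < L) : a * b ≤ L/2 * a^2 + 1/(2*L) * b^2 := by
  rw [← sub_nonneg]
  have e : L/2 * a^2 + 1/(2*L) * b^2 - a * b = (L*a - b)^2/(2*L) := by
    field_simp
    ring
  rw [e]
  positivity

lemma opt_bound {A B C : ℝ} (hA : 0 ≤ A) (hB : 0 ≤ B)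
    (h : ∀ μ : ℝ, 0 < μ → C ≤ μ/2 * A^2 + 1/(2*μ) * B^2) : C ≤ A * B := by
  refine le_of_forall_pos_le_add (fun ε hε => ?_)
  by_cases hAB : A + B = 0
  · have hA0 : A = 0 := by linarith
    have hB0 : B = 0 := by linarith
    have h1 := h 1 one_pos
    rw [hA0, hB0] at h1 ⊢
    norm_num at h1 ⊢
    linarith
  · have hABpos : 0 < A + B := lt_of_le_of_ne (by linarith) (Ne.symm hAB)
    set δ := 2*ε/(A+B) with hδ
    have hδpos : 0 < δ := by positivity
    have hAδ : 0 < A + δ := by linarith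
    have hBδ : 0 < B + δ := by linarith
    have hμpos : 0 < (B+δ)/(A+δ) := by positivity
    have hbound := h _ hμpos
    have b1 : (B+δ)/(A+δ)/2 * A^2 ≤ (A*B + δ*A)/2 := by
      rw [div_div, div_mul_eq_mul_div, div_le_div_iff₀ (by positivity) (by norm_num : (0:ℝ) < 2)]
      nlinarith [mul_nonneg (mul_nonneg hA hBδ.le) hδpos.le]
    have b2 : 1/(2*((B+δ)/(A+δ))) * B^2 ≤ (A*B + δ*B)/2 := by
      have e : 1/(2*((B+δ)/(A+δ))) = (A+δ)/(2*(B+δ)) := by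
        field_simp
      rw [e, div_mul_eq_mul_div, div_le_div_iff₀ (by positivity) (by norm_num : (0:ℝ) < 2)]
      nlinarith [mul_nonneg (mul_nonneg hB hAδ.le) hδpos.le]
    have hfin : δ*A/2 + δ*B/2 = ε := by
      rw [hδ]
      field_simp
    calc C ≤ (B+δ)/(A+δ)/2 * A^2 + 1/(2*((B+δ)/(A+δ))) * B^2 := hbound
      _ ≤ (A*B + δ*A)/2 + (A*B + δ*B)/2 := add_le_add b1 b2
      _ = A*B + (δ*A/2 + δ*B/2) := by ring
      _ = A*B + ε := by rw [hfin]

lemma swapK (𝒳 : Finset (Finset Λ)) (W : Finset Λ → H →L[ℂ] H) (g : ℝ)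
    (hg : ∀ x : Λ, ∑ X ∈ 𝒳.filter (fun X => x ∈ X), (X.card : ℝ) * ‖W X‖ ≤ g) (τ : Finset Λ) :
    ∑ X ∈ 𝒳, ‖W X‖ * (X.card:ℝ) * ((τ ∩ X).card:ℝ) ≤ (τ.card:ℝ) * g := by
  have hcard : ∀ X : Finset Λ, ((τ ∩ X).card : ℝ) = ∑ x ∈ τ, if x ∈ X then (1:ℝ) else 0 := by
    intro X
    rw [← Finset.filter_mem_eq_inter, Finset.card_filter]
    push_cast
    rfl
  calc ∑ X ∈ 𝒳, ‖W X‖ * (X.card:ℝ) * ((τ ∩ X).card:ℝ)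
      = ∑ X ∈ 𝒳, ∑ x ∈ τ, (if x ∈ X then ‖W X‖ * (X.card:ℝ) else 0) := by
        refine Finset.sum_congr rfl (fun X _ => ?_)
        rw [hcard X, Finset.mul_sum]
        refine Finset.sum_congr rfl (fun x _ => ?_)
        split_ifs <;> simp
    _ = ∑ x ∈ τ, ∑ X ∈ 𝒳, (if x ∈ X then ‖W X‖ * (X.card:ℝ) else 0) := Finset.sum_comm
    _ ≤ ∑ _x ∈ τ, g := by
        refine Finset.sum_le_sum (fun x _ => ?_)
        rw [← Finset.sum_filter]
        calc ∑ X ∈ 𝒳.filter (fun X => x ∈ X), ‖W X‖ * (X.card:ℝ)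
            = ∑ X ∈ 𝒳.filter (fun X => x ∈ X), (X.card:ℝ) * ‖W X‖ :=
              Finset.sum_congr rfl (fun X _ => mul_comm _ _)
          _ ≤ g := hg x
    _ = (τ.card:ℝ) * g := by rw [Finset.sum_const, nsmul_eq_mul]

lemma boundK1 (𝒳 : Finset (Finset Λ)) (W : Finset Λ → H →L[ℂ] H) (g : ℝ) (hg₀ : 0 ≤ g)
    (hg : ∀ x : Λ, ∑ X ∈ 𝒳.filter (fun X => x ∈ X), (X.card : ℝ) * ‖W X‖ ≤ g) (τ : Finset Λ) :
    ∑ X ∈ 𝒳, (if (τ ∩ X).Nonempty then ‖W X‖ * (X.card:ℝ) / (((τ \ X).card:ℝ) + 1) else 0)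
      ≤ g := by
  by_cases hτ : τ = ∅
  · subst hτ
    simp
    exact hg₀
  · have hτpos : 0 < (τ.card:ℝ) := by
      exact_mod_cast Finset.card_pos.mpr (Finset.nonempty_iff_ne_empty.mpr hτ)
    have step : ∀ X ∈ 𝒳,
        (if (τ ∩ X).Nonempty then ‖W X‖ * (X.card:ℝ) / (((τ \ X).card:ℝ) + 1) else 0)
          ≤ ‖W X‖ * (X.card:ℝ) * ((τ ∩ X).card:ℝ) / (τ.card:ℝ) := by
      intro X _
      by_cases hne : (τ ∩ X).Nonempty
      · rw [if_pos hne]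
        have hm : (1:ℝ) ≤ ((τ ∩ X).card:ℝ) := by exact_mod_cast Finset.card_pos.mpr hne
        have hsplit : ((τ ∩ X).card:ℝ) + ((τ \ X).card:ℝ) = (τ.card:ℝ) := by
          exact_mod_cast Finset.card_inter_add_card_sdiff τ X
        have hW : (0:ℝ) ≤ ‖W X‖ * (X.card:ℝ) := by positivity
        have hk : (0:ℝ) ≤ ((τ \ X).card:ℝ) := by positivity
        rw [div_le_div_iff₀ (by positivity) hτpos]
        nlinarith [mul_nonneg hW (mul_nonneg hk (by linarith : (0:ℝ) ≤ ((τ ∩ X).card:ℝ) - 1))]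
      · rw [if_neg hne]
        positivity
    calc ∑ X ∈ 𝒳, (if (τ ∩ X).Nonempty then ‖W X‖ * (X.card:ℝ) / (((τ \ X).card:ℝ) + 1) else 0)
        ≤ ∑ X ∈ 𝒳, ‖W X‖ * (X.card:ℝ) * ((τ ∩ X).card:ℝ) / (τ.card:ℝ) :=
          Finset.sum_le_sum step
      _ = (∑ X ∈ 𝒳, ‖W X‖ * (X.card:ℝ) * ((τ ∩ X).card:ℝ)) / (τ.card:ℝ) :=
          (Finset.sum_div _ _ _).symm
      _ ≤ ((τ.card:ℝ) * g) / (τ.card:ℝ) := by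
          gcongr
          exact swapK 𝒳 W g hg τ
      _ = g := by field_simp

lemma boundK2 (𝒳 : Finset (Finset Λ)) (h𝒳 : ∀ X ∈ 𝒳, X.Nonempty)
    (W : Finset Λ → H →L[ℂ] H) (g : ℝ) (hg₀ : 0 ≤ g)
    (hg : ∀ x : Λ, ∑ X ∈ 𝒳.filter (fun X => x ∈ X), (X.card : ℝ) * ‖W X‖ ≤ g) (σ : Finset Λ) :
    ∑ X ∈ 𝒳, (if (σ ∩ X).Nonempty then ‖W X‖ * (((σ \ X).card:ℝ) + 1) / (X.card:ℝ) else 0)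
      ≤ g * ((σ.card:ℝ))^2 := by
  have step : ∀ X ∈ 𝒳,
      (if (σ ∩ X).Nonempty then ‖W X‖ * (((σ \ X).card:ℝ) + 1) / (X.card:ℝ) else 0)
        ≤ ‖W X‖ * (X.card:ℝ) * ((σ ∩ X).card:ℝ) * (σ.card:ℝ) := by
    intro X hX
    by_cases hne : (σ ∩ X).Nonempty
    · rw [if_pos hne]
      have hm : (1:ℝ) ≤ ((σ ∩ X).card:ℝ) := by exact_mod_cast Finset.card_pos.mpr hne
      have hc : (1:ℝ) ≤ ((X.card:ℕ):ℝ) := by exact_mod_cast Finset.card_pos.mpr (h𝒳 X hX)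
      have hsplit : ((σ ∩ X).card:ℝ) + ((σ \ X).card:ℝ) = (σ.card:ℝ) := by
        exact_mod_cast Finset.card_inter_add_card_sdiff σ X
      have hW : (0:ℝ) ≤ ‖W X‖ := norm_nonneg _
      have hk : (0:ℝ) ≤ ((σ \ X).card:ℝ) := by positivity
      have ht : (0:ℝ) ≤ (σ.card:ℝ) := by positivity
      have hccm : (1:ℝ) ≤ (X.card:ℝ)*(X.card:ℝ)*((σ ∩ X).card:ℝ) := by nlinarith
      rw [div_le_iff₀ (by linarith : (0:ℝ) < (X.card:ℝ))]
      have h1 : ‖W X‖ * (((σ \ X).card:ℝ) + 1) ≤ ‖W X‖ * (σ.card:ℝ) := by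
        apply mul_le_mul_of_nonneg_left _ hW
        linarith
      have h2 : ‖W X‖ * (σ.card:ℝ)
          ≤ ‖W X‖ * (X.card:ℝ) * ((σ ∩ X).card:ℝ) * (σ.card:ℝ) * (X.card:ℝ) := by
        nlinarith [mul_nonneg (mul_nonneg hW ht)
          (by linarith : (0:ℝ) ≤ (X.card:ℝ)*(X.card:ℝ)*((σ ∩ X).card:ℝ) - 1)]
      linarith
    · rw [if_neg hne]
      positivity
  calc ∑ X ∈ 𝒳, (if (σ ∩ X).Nonempty then ‖W X‖ * (((σ \ X).card:ℝ) + 1) / (X.card:ℝ) else 0)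
      ≤ ∑ X ∈ 𝒳, ‖W X‖ * (X.card:ℝ) * ((σ ∩ X).card:ℝ) * (σ.card:ℝ) := Finset.sum_le_sum step
    _ = (∑ X ∈ 𝒳, ‖W X‖ * (X.card:ℝ) * ((σ ∩ X).card:ℝ)) * (σ.card:ℝ) :=
        (Finset.sum_mul _ _ _).symm
    _ ≤ ((σ.card:ℝ) * g) * (σ.card:ℝ) := by
        apply mul_le_mul_of_nonneg_right (swapK 𝒳 W g hg σ) (by positivity)
    _ = g * ((σ.card:ℝ))^2 := by ring

lemma EWE_zero (q : Λ → H →L[ℂ] H) (hq_comm : ∀ x y, Commute (q x) (q y))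
    (hq_idem : ∀ x, q x * q x = q x) (X : Finset Λ) (WX : H →L[ℂ] H)
    (hWg : WX * groundProjection q hq_comm X = 0)
    (hgW : groundProjection q hq_comm X * WX = 0)
    (hWq : ∀ y, y ∉ X → Commute WX (q y))
    (τ σ : Finset Λ)
    (hcond : ¬((τ ∩ X).Nonempty ∧ (σ ∩ X).Nonempty ∧ σ \ X = τ \ X)) :
    Eu q hq_comm τ * (WX * Eu q hq_comm σ) = 0 := by
  by_cases h1 : (τ ∩ X).Nonempty
  · by_cases h2 : (σ ∩ X).Nonempty
    · have hne : σ \ X ≠ τ \ X := fun h => hcond ⟨h1, h2, h⟩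
      have h' : ¬∀ a, a ∈ σ \ X ↔ a ∈ τ \ X := fun h => hne (Finset.ext h)
      obtain ⟨y, hy⟩ := not_forall.mp h'
      by_cases hyσ : y ∈ σ \ X <;> by_cases hyτ : y ∈ τ \ X
      · exact absurd (iff_of_true hyσ hyτ) hy
      · obtain ⟨hyσ', hyX⟩ := Finset.mem_sdiff.mp hyσ
        have hyτ' : y ∉ τ := fun h => hyτ (Finset.mem_sdiff.mpr ⟨h, hyX⟩)
        have e1 : q y * Eu q hq_comm σ = Eu q hq_comm σ := by
          rw [q_mul_Eu q hq_comm hq_idem, if_pos hyσ']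
        have e2 : Eu q hq_comm τ * q y = 0 := by
          rw [Eu_mul_q q hq_comm hq_idem, if_neg hyτ']
        have hmove : WX * (q y * Eu q hq_comm σ) = q y * (WX * Eu q hq_comm σ) := by
          rw [← mul_assoc, (hWq y hyX).eq, mul_assoc]
        calc Eu q hq_comm τ * (WX * Eu q hq_comm σ)
            = Eu q hq_comm τ * (WX * (q y * Eu q hq_comm σ)) := by rw [e1]
          _ = Eu q hq_comm τ * (q y * (WX * Eu q hq_comm σ)) := by rw [hmove]
          _ = (Eu q hq_comm τ * q y) * (WX * Eu q hq_comm σ) := by rw [mul_assoc]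
          _ = 0 := by rw [e2, zero_mul]
      · obtain ⟨hyτ'', hyX⟩ := Finset.mem_sdiff.mp hyτ
        have hyσ'' : y ∉ σ := fun h => hyσ (Finset.mem_sdiff.mpr ⟨h, hyX⟩)
        have e1 : q y * Eu q hq_comm σ = 0 := by
          rw [q_mul_Eu q hq_comm hq_idem, if_neg hyσ'']
        have e2 : Eu q hq_comm τ * q y = Eu q hq_comm τ := by
          rw [Eu_mul_q q hq_comm hq_idem, if_pos hyτ'']
        have hmove : q y * (WX * Eu q hq_comm σ) = WX * (q y * Eu q hq_comm σ) := by
          rw [← mul_assoc, ← (hWq y hyX).eq, mul_assoc]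
        calc Eu q hq_comm τ * (WX * Eu q hq_comm σ)
            = (Eu q hq_comm τ * q y) * (WX * Eu q hq_comm σ) := by rw [e2]
          _ = Eu q hq_comm τ * (q y * (WX * Eu q hq_comm σ)) := by rw [mul_assoc]
          _ = Eu q hq_comm τ * (WX * (q y * Eu q hq_comm σ)) := by rw [hmove]
          _ = 0 := by rw [e1, mul_zero, mul_zero]
      · exact absurd (iff_of_false hyσ hyτ) hy
    · have hdis : ∀ x ∈ X, x ∉ σ := by
        intro x hx hxσ
        exact h2 ⟨x, Finset.mem_inter.mpr ⟨hxσ, hx⟩⟩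
      have hzero : WX * Eu q hq_comm σ = 0 := by
        rw [← ground_mul_Eu q hq_comm hq_idem X σ hdis, ← mul_assoc, hWg, zero_mul]
      rw [hzero, mul_zero]
  · have hdis : ∀ x ∈ X, x ∉ τ := fun x hx hxτ => h1 ⟨x, Finset.mem_inter.mpr ⟨hxτ, hx⟩⟩
    have hτ0 : Eu q hq_comm τ * WX = 0 := by
      rw [← Eu_mul_ground q hq_comm hq_idem X τ hdis, mul_assoc, hgW, mul_zero]
    rw [← mul_assoc, hτ0, zero_mul]

lemma numeric_bound (𝒳 : Finset (Finset Λ)) (h𝒳 : ∀ X ∈ 𝒳, X.Nonempty)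
    (W : Finset Λ → H →L[ℂ] H) (g : ℝ) (hgpos : 0 < g)
    (hg : ∀ x : Λ, ∑ X ∈ 𝒳.filter (fun X => x ∈ X), (X.card : ℝ) * ‖W X‖ ≤ g)
    (a b : Finset Λ → ℝ) (u v : Finset Λ → Finset Λ → ℝ)
    (hu2 : ∀ X ρ, u X ρ^2
      = ∑ τ ∈ Finset.univ.filter (fun τ => τ \ X = ρ ∧ (τ ∩ X).Nonempty), a τ^2)
    (hv2 : ∀ X ρ, v X ρ^2
      = ∑ σ ∈ Finset.univ.filter (fun σ => σ \ X = ρ ∧ (σ ∩ X).Nonempty), b σ^2)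
    (μ : ℝ) (hμ : 0 < μ) :
    ∑ X ∈ 𝒳, ∑ ρ : Finset Λ, ‖W X‖ * (u X ρ * v X ρ)
      ≤ μ/2 * (∑ τ : Finset Λ, a τ^2)
        + 1/(2*μ) * (g^2 * ∑ σ : Finset Λ, ((σ.card:ℝ))^2 * b σ^2) := by
  have hgne : g ≠ 0 := ne_of_gt hgpos
  have hμne : μ ≠ 0 := ne_of_gt hμ
  set lam : Finset Λ → Finset Λ → ℝ :=
    fun X ρ => μ * (X.card:ℝ) / (g * ((ρ.card:ℝ)+1)) with hlam
  have hlampos : ∀ X ∈ 𝒳, ∀ ρ : Finset Λ, 0 < lam X ρ := by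
    intro X hX ρ
    have hc : (0:ℝ) < (X.card:ℝ) := by exact_mod_cast Finset.card_pos.mpr (h𝒳 X hX)
    have hd : (0:ℝ) < (ρ.card:ℝ) + 1 := by positivity
    exact div_pos (mul_pos hμ hc) (mul_pos hgpos hd)
  have hterm : ∀ X ∈ 𝒳, ∀ ρ : Finset Λ, ‖W X‖ * (u X ρ * v X ρ)
      ≤ ‖W X‖ * (lam X ρ/2 * u X ρ^2) + ‖W X‖ * (1/(2*lam X ρ) * v X ρ^2) := by
    intro X hX ρ
    have h := amgm_half (lam X ρ) (u X ρ) (v X ρ) (hlampos X hX ρ)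
    calc ‖W X‖ * (u X ρ * v X ρ)
        ≤ ‖W X‖ * (lam X ρ/2 * u X ρ^2 + 1/(2*lam X ρ) * v X ρ^2) :=
          mul_le_mul_of_nonneg_left h (norm_nonneg _)
      _ = ‖W X‖ * (lam X ρ/2 * u X ρ^2) + ‖W X‖ * (1/(2*lam X ρ) * v X ρ^2) := by ring
  have hSa : ∑ X ∈ 𝒳, ∑ ρ : Finset Λ, ‖W X‖ * (lam X ρ/2 * u X ρ^2)
      ≤ μ/2 * ∑ τ : Finset Λ, a τ^2 := by
    have hXeq : ∀ X ∈ 𝒳, ∑ ρ : Finset Λ, ‖W X‖ * (lam X ρ/2 * u X ρ^2)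
        = ∑ τ ∈ Finset.univ.filter (fun τ => (τ ∩ X).Nonempty),
            ‖W X‖ * (lam X (τ \ X)/2 * a τ^2) := by
      intro X hX
      rw [← block_reindex X (fun ρ τ => ‖W X‖ * (lam X ρ/2 * a τ^2))]
      refine Finset.sum_congr rfl (fun ρ _ => ?_)
      rw [hu2 X ρ, Finset.mul_sum, Finset.mul_sum]
    refine le_trans (le_of_eq (Finset.sum_congr rfl hXeq)) ?_
    have hswap : ∑ X ∈ 𝒳, ∑ τ ∈ Finset.univ.filter (fun τ => (τ ∩ X).Nonempty),
        ‖W X‖ * (lam X (τ \ X)/2 * a τ^2)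
        = ∑ τ : Finset Λ,
            (∑ X ∈ 𝒳, if (τ ∩ X).Nonempty then ‖W X‖ * (lam X (τ \ X)/2) else 0) * a τ^2 := by
      simp only [Finset.sum_filter]
      rw [Finset.sum_comm]
      refine Finset.sum_congr rfl (fun τ _ => ?_)
      rw [Finset.sum_mul]
      refine Finset.sum_congr rfl (fun X _ => ?_)
      split_ifs with h
      · ring
      · rw [zero_mul]
    rw [hswap]
    have hcoef : ∀ τ : Finset Λ,
        (∑ X ∈ 𝒳, if (τ ∩ X).Nonempty then ‖W X‖ * (lam X (τ \ X)/2) else 0) ≤ μ/2 := by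
      intro τ
      have heach : ∀ X ∈ 𝒳, (if (τ ∩ X).Nonempty then ‖W X‖ * (lam X (τ \ X)/2) else 0)
          = (μ/g)/2 * (if (τ ∩ X).Nonempty
              then ‖W X‖ * (X.card:ℝ) / (((τ \ X).card:ℝ) + 1) else 0) := by
        intro X _
        split_ifs with h
        · rw [hlam]
          have hd : ((τ \ X).card:ℝ) + 1 ≠ 0 := by positivity
          field_simp
        · rw [mul_zero]
      rw [Finset.sum_congr rfl heach, ← Finset.mul_sum]
      calc (μ/g)/2 * (∑ X ∈ 𝒳, if (τ ∩ X).Nonempty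
              then ‖W X‖ * (X.card:ℝ) / (((τ \ X).card:ℝ) + 1) else 0)
          ≤ (μ/g)/2 * g :=
            mul_le_mul_of_nonneg_left (boundK1 𝒳 W g hgpos.le hg τ) (by positivity)
        _ = μ/2 := by field_simp
    calc ∑ τ : Finset Λ,
          (∑ X ∈ 𝒳, if (τ ∩ X).Nonempty then ‖W X‖ * (lam X (τ \ X)/2) else 0) * a τ^2
        ≤ ∑ τ : Finset Λ, μ/2 * a τ^2 :=
          Finset.sum_le_sum (fun τ _ =>
            mul_le_mul_of_nonneg_right (hcoef τ) (sq_nonneg _))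
      _ = μ/2 * ∑ τ : Finset Λ, a τ^2 := by rw [Finset.mul_sum]
  have hSb : ∑ X ∈ 𝒳, ∑ ρ : Finset Λ, ‖W X‖ * (1/(2*lam X ρ) * v X ρ^2)
      ≤ 1/(2*μ) * (g^2 * ∑ σ : Finset Λ, ((σ.card:ℝ))^2 * b σ^2) := by
    have hXeq : ∀ X ∈ 𝒳, ∑ ρ : Finset Λ, ‖W X‖ * (1/(2*lam X ρ) * v X ρ^2)
        = ∑ σ ∈ Finset.univ.filter (fun σ => (σ ∩ X).Nonempty),
            ‖W X‖ * (1/(2*lam X (σ \ X)) * b σ^2) := by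
      intro X hX
      rw [← block_reindex X (fun ρ σ => ‖W X‖ * (1/(2*lam X ρ) * b σ^2))]
      refine Finset.sum_congr rfl (fun ρ _ => ?_)
      rw [hv2 X ρ, Finset.mul_sum, Finset.mul_sum]
    refine le_trans (le_of_eq (Finset.sum_congr rfl hXeq)) ?_
    have hswap : ∑ X ∈ 𝒳, ∑ σ ∈ Finset.univ.filter (fun σ => (σ ∩ X).Nonempty),
        ‖W X‖ * (1/(2*lam X (σ \ X)) * b σ^2)
        = ∑ σ : Finset Λ,
            (∑ X ∈ 𝒳, if (σ ∩ X).Nonempty then ‖W X‖ * (1/(2*lam X (σ \ X))) else 0) * b σ^2 := by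
      simp only [Finset.sum_filter]
      rw [Finset.sum_comm]
      refine Finset.sum_congr rfl (fun σ _ => ?_)
      rw [Finset.sum_mul]
      refine Finset.sum_congr rfl (fun X _ => ?_)
      split_ifs with h
      · ring
      · rw [zero_mul]
    rw [hswap]
    have hcoef : ∀ σ : Finset Λ,
        (∑ X ∈ 𝒳, if (σ ∩ X).Nonempty then ‖W X‖ * (1/(2*lam X (σ \ X))) else 0)
          ≤ (g/μ)/2 * (g * ((σ.card:ℝ))^2) := by
      intro σ
      have heach : ∀ X ∈ 𝒳, (if (σ ∩ X).Nonempty then ‖W X‖ * (1/(2*lam X (σ \ X))) else 0)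
          = (g/μ)/2 * (if (σ ∩ X).Nonempty
              then ‖W X‖ * (((σ \ X).card:ℝ) + 1) / (X.card:ℝ) else 0) := by
        intro X hX
        split_ifs with h
        · rw [hlam]
          have hc : (X.card:ℝ) ≠ 0 := by
            have : (0:ℝ) < (X.card:ℝ) := by exact_mod_cast Finset.card_pos.mpr (h𝒳 X hX)
            exact ne_of_gt this
          have hd : ((σ \ X).card:ℝ) + 1 ≠ 0 := by positivity
          field_simp
        · rw [mul_zero]
      rw [Finset.sum_congr rfl heach, ← Finset.mul_sum]
      exact mul_le_mul_of_nonneg_left (boundK2 𝒳 h𝒳 W g hgpos.le hg σ) (by positivity)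
    calc ∑ σ : Finset Λ,
          (∑ X ∈ 𝒳, if (σ ∩ X).Nonempty then ‖W X‖ * (1/(2*lam X (σ \ X))) else 0) * b σ^2
        ≤ ∑ σ : Finset Λ, ((g/μ)/2 * (g * ((σ.card:ℝ))^2)) * b σ^2 :=
          Finset.sum_le_sum (fun σ _ =>
            mul_le_mul_of_nonneg_right (hcoef σ) (sq_nonneg _))
      _ = ∑ σ : Finset Λ, 1/(2*μ) * (g^2 * (((σ.card:ℝ))^2 * b σ^2)) := by
          refine Finset.sum_congr rfl (fun σ _ => ?_)
          field_simp
      _ = 1/(2*μ) * (g^2 * ∑ σ : Finset Λ, ((σ.card:ℝ))^2 * b σ^2) := by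
          rw [← Finset.mul_sum, ← Finset.mul_sum]
  calc ∑ X ∈ 𝒳, ∑ ρ : Finset Λ, ‖W X‖ * (u X ρ * v X ρ)
      ≤ ∑ X ∈ 𝒳, ∑ ρ : Finset Λ,
          (‖W X‖ * (lam X ρ/2 * u X ρ^2) + ‖W X‖ * (1/(2*lam X ρ) * v X ρ^2)) :=
        Finset.sum_le_sum (fun X hX => Finset.sum_le_sum (fun ρ _ => hterm X hX ρ))
    _ = (∑ X ∈ 𝒳, ∑ ρ : Finset Λ, ‖W X‖ * (lam X ρ/2 * u X ρ^2))
        + ∑ X ∈ 𝒳, ∑ ρ : Finset Λ, ‖W X‖ * (1/(2*lam X ρ) * v X ρ^2) := by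
        rw [← Finset.sum_add_distrib]
        exact Finset.sum_congr rfl (fun X _ => Finset.sum_add_distrib)
    _ ≤ μ/2 * (∑ τ : Finset Λ, a τ^2)
        + 1/(2*μ) * (g^2 * ∑ σ : Finset Λ, ((σ.card:ℝ))^2 * b σ^2) := add_le_add hSa hSb

lemma key_bound
    (q : Λ → H →L[ℂ] H)
    (hq_sa : ∀ x, IsSelfAdjoint (q x))
    (hq_idem : ∀ x, q x * q x = q x)
    (hq_comm : ∀ x y, Commute (q x) (q y))
    (𝒳 : Finset (Finset Λ)) (h𝒳 : ∀ X ∈ 𝒳, X.Nonempty)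
    (W : Finset Λ → H →L[ℂ] H)
    (hW_comm : ∀ X ∈ 𝒳, ∀ y, y ∉ X → Commute (W X) (q y))
    (hWP : ∀ X ∈ 𝒳, W X * groundProjection q hq_comm X = 0 ∧
      groundProjection q hq_comm X * W X = 0)
    (g : ℝ) (hgpos : 0 < g)
    (hg : ∀ x : Λ, ∑ X ∈ 𝒳.filter (fun X => x ∈ X), (X.card : ℝ) * ‖W X‖ ≤ g)
    (Ψ Φ : H) :
    ‖(⟪Φ, (∑ X ∈ 𝒳, W X) Ψ⟫ : ℂ)‖ ≤ ‖Φ‖ * (g * ‖(∑ x : Λ, q x) Ψ‖) := by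
  have hEsa : ∀ σ : Finset Λ, IsSelfAdjoint (Eu q hq_comm σ) :=
    fun σ => Es_sa q hq_comm hq_sa Finset.univ σ
  have hInner0 : ∀ (x y : H) {σ τ : Finset Λ}, σ ≠ τ →
      (⟪Eu q hq_comm σ x, Eu q hq_comm τ y⟫ : ℂ) = 0 := by
    intro x y σ τ hne
    rw [isSelfAdjoint_inner_move (hEsa σ)]
    have h0 : Eu q hq_comm σ (Eu q hq_comm τ y) = (Eu q hq_comm σ * Eu q hq_comm τ) y := rfl
    rw [h0, Eu_mul_Eu_of_ne q hq_comm hq_idem hne]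
    simp
  have hPhi : Φ = ∑ τ : Finset Λ, Eu q hq_comm τ Φ := by
    have h := congrArg (fun A : H →L[ℂ] H => A Φ) (sum_Eu q hq_comm)
    simpa using h.symm
  have hPsi : Ψ = ∑ σ : Finset Λ, Eu q hq_comm σ Ψ := by
    have h := congrArg (fun A : H →L[ℂ] H => A Ψ) (sum_Eu q hq_comm)
    simpa using h.symm
  -- vanishing of incompatible matrix elements
  have hvanish : ∀ X ∈ 𝒳, ∀ τ σ : Finset Λ,
      ¬((τ ∩ X).Nonempty ∧ (σ ∩ X).Nonempty ∧ σ \ X = τ \ X) →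
      (⟪Eu q hq_comm τ Φ, W X (Eu q hq_comm σ Ψ)⟫ : ℂ) = 0 := by
    intro X hX τ σ hcond
    have hz := EWE_zero q hq_comm hq_idem X (W X) (hWP X hX).1 (hWP X hX).2
      (fun y hy => hW_comm X hX y hy) τ σ hcond
    rw [isSelfAdjoint_inner_move (hEsa τ)]
    have h0 : Eu q hq_comm τ (W X (Eu q hq_comm σ Ψ))
        = (Eu q hq_comm τ * (W X * Eu q hq_comm σ)) Ψ := rfl
    rw [h0, hz]
    simp
  -- blockwise decomposition of the matrix element
  have hsplit : (⟪Φ, (∑ X ∈ 𝒳, W X) Ψ⟫ : ℂ) =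
      ∑ X ∈ 𝒳, ∑ ρ : Finset Λ,
        ⟪∑ τ ∈ Finset.univ.filter (fun τ => τ \ X = ρ ∧ (τ ∩ X).Nonempty), Eu q hq_comm τ Φ,
          W X (∑ σ ∈ Finset.univ.filter (fun σ => σ \ X = ρ ∧ (σ ∩ X).Nonempty),
            Eu q hq_comm σ Ψ)⟫ := by
    have hWs : (∑ X ∈ 𝒳, W X) Ψ = ∑ X ∈ 𝒳, W X Ψ := by
      simp
    rw [hWs, inner_sum]
    refine Finset.sum_congr rfl (fun X hX => ?_)
    have expand : ∀ ρ : Finset Λ,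
        (⟪∑ τ ∈ Finset.univ.filter (fun τ => τ \ X = ρ ∧ (τ ∩ X).Nonempty), Eu q hq_comm τ Φ,
          W X (∑ σ ∈ Finset.univ.filter (fun σ => σ \ X = ρ ∧ (σ ∩ X).Nonempty),
            Eu q hq_comm σ Ψ)⟫ : ℂ)
        = ∑ τ ∈ Finset.univ.filter (fun τ => τ \ X = ρ ∧ (τ ∩ X).Nonempty),
            ∑ σ ∈ Finset.univ.filter (fun σ => σ \ X = ρ ∧ (σ ∩ X).Nonempty),
              ⟪Eu q hq_comm τ Φ, W X (Eu q hq_comm σ Ψ)⟫ := by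
      intro ρ
      rw [map_sum, sum_inner]
      exact Finset.sum_congr rfl (fun τ _ => inner_sum _ _ _)
    rw [Finset.sum_congr rfl (fun ρ _ => expand ρ)]
    rw [block_reindex X (fun ρ τ => ∑ σ ∈ Finset.univ.filter
        (fun σ => σ \ X = ρ ∧ (σ ∩ X).Nonempty),
          (⟪Eu q hq_comm τ Φ, W X (Eu q hq_comm σ Ψ)⟫ : ℂ))]
    conv_lhs => rw [hPhi, hPsi]
    rw [map_sum, sum_inner, Finset.sum_filter]
    refine Finset.sum_congr rfl (fun τ _ => ?_)
    rw [inner_sum]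
    by_cases h1 : (τ ∩ X).Nonempty
    · rw [if_pos h1, Finset.sum_filter]
      refine Finset.sum_congr rfl (fun σ _ => ?_)
      by_cases h2 : σ \ X = τ \ X ∧ (σ ∩ X).Nonempty
      · rw [if_pos h2]
      · rw [if_neg h2]
        exact hvanish X hX τ σ (fun hc => h2 ⟨hc.2.2, hc.2.1⟩)
    · rw [if_neg h1]
      exact Finset.sum_eq_zero (fun σ _ => hvanish X hX τ σ (fun hc => h1 hc.1))
  -- norms of blocks
  have hu2 : ∀ X ρ : Finset Λ,
      ‖∑ τ ∈ Finset.univ.filter (fun τ => τ \ X = ρ ∧ (τ ∩ X).Nonempty), Eu q hq_comm τ Φ‖^2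
        = ∑ τ ∈ Finset.univ.filter (fun τ => τ \ X = ρ ∧ (τ ∩ X).Nonempty),
            ‖Eu q hq_comm τ Φ‖^2 :=
    fun X ρ => norm_sq_sum_ortho _ _ (fun i _ j _ hne => hInner0 Φ Φ hne)
  have hv2 : ∀ X ρ : Finset Λ,
      ‖∑ σ ∈ Finset.univ.filter (fun σ => σ \ X = ρ ∧ (σ ∩ X).Nonempty), Eu q hq_comm σ Ψ‖^2
        = ∑ σ ∈ Finset.univ.filter (fun σ => σ \ X = ρ ∧ (σ ∩ X).Nonempty),
            ‖Eu q hq_comm σ Ψ‖^2 :=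
    fun X ρ => norm_sq_sum_ortho _ _ (fun i _ j _ hne => hInner0 Ψ Ψ hne)
  have hNorm2Phi : ∑ τ : Finset Λ, ‖Eu q hq_comm τ Φ‖^2 = ‖Φ‖^2 := by
    conv_rhs => rw [hPhi]
    rw [norm_sq_sum_ortho Finset.univ (fun τ => Eu q hq_comm τ Φ)
      (fun i _ j _ hne => hInner0 Φ Φ hne)]
  -- the number operator on the spectral subspaces
  have hNpsi : ‖(∑ x : Λ, q x) Ψ‖^2
      = ∑ σ : Finset Λ, ((σ.card:ℝ))^2 * ‖Eu q hq_comm σ Ψ‖^2 := by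
    have hNE : ∀ σ : Finset Λ, (∑ x : Λ, q x) (Eu q hq_comm σ Ψ)
        = ((σ.card:ℕ):ℂ) • (Eu q hq_comm σ Ψ) := by
      intro σ
      have h1 : (∑ x : Λ, q x) (Eu q hq_comm σ Ψ) = ∑ x : Λ, q x (Eu q hq_comm σ Ψ) := by
        simp
      rw [h1]
      have h2 : ∀ x : Λ, q x (Eu q hq_comm σ Ψ)
          = if x ∈ σ then Eu q hq_comm σ Ψ else 0 := by
        intro x
        have h3 := congrArg (fun A : H →L[ℂ] H => A Ψ) (q_mul_Eu q hq_comm hq_idem x σ)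
        simpa [apply_ite (fun A : H →L[ℂ] H => A Ψ)] using h3
      rw [Finset.sum_congr rfl (fun x _ => h2 x), Finset.sum_ite_mem, Finset.univ_inter,
        Finset.sum_const, Nat.cast_smul_eq_nsmul]
    have hNΨ : (∑ x : Λ, q x) Ψ = ∑ σ : Finset Λ, ((σ.card:ℕ):ℂ) • Eu q hq_comm σ Ψ := by
      conv_lhs => rw [hPsi]
      rw [map_sum]
      exact Finset.sum_congr rfl (fun σ _ => hNE σ)
    rw [hNΨ, norm_sq_sum_ortho Finset.univ _ (fun i _ j _ hne => by
      rw [inner_smul_left, inner_smul_right, hInner0 Ψ Ψ hne, mul_zero, mul_zero])]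
    refine Finset.sum_congr rfl (fun σ _ => ?_)
    rw [norm_smul]
    have hc : ‖((σ.card:ℕ):ℂ)‖ = (σ.card:ℝ) := by simp
    rw [hc, mul_pow]
  -- step 2: triangle inequality and Cauchy-Schwarz
  have step2 : ‖(⟪Φ, (∑ X ∈ 𝒳, W X) Ψ⟫ : ℂ)‖ ≤
      ∑ X ∈ 𝒳, ∑ ρ : Finset Λ, ‖W X‖ *
        (‖∑ τ ∈ Finset.univ.filter (fun τ => τ \ X = ρ ∧ (τ ∩ X).Nonempty), Eu q hq_comm τ Φ‖ *
         ‖∑ σ ∈ Finset.univ.filter (fun σ => σ \ X = ρ ∧ (σ ∩ X).Nonempty), Eu q hq_comm σ Ψ‖) := by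
    rw [hsplit]
    refine le_trans (norm_sum_le _ _) (Finset.sum_le_sum (fun X _ => ?_))
    refine le_trans (norm_sum_le _ _) (Finset.sum_le_sum (fun ρ _ => ?_))
    calc ‖(⟪∑ τ ∈ Finset.univ.filter (fun τ => τ \ X = ρ ∧ (τ ∩ X).Nonempty),
            Eu q hq_comm τ Φ,
          W X (∑ σ ∈ Finset.univ.filter (fun σ => σ \ X = ρ ∧ (σ ∩ X).Nonempty),
            Eu q hq_comm σ Ψ)⟫ : ℂ)‖
        ≤ ‖∑ τ ∈ Finset.univ.filter (fun τ => τ \ X = ρ ∧ (τ ∩ X).Nonempty),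
            Eu q hq_comm τ Φ‖ *
          ‖W X (∑ σ ∈ Finset.univ.filter (fun σ => σ \ X = ρ ∧ (σ ∩ X).Nonempty),
            Eu q hq_comm σ Ψ)‖ := norm_inner_le_norm _ _
      _ ≤ ‖∑ τ ∈ Finset.univ.filter (fun τ => τ \ X = ρ ∧ (τ ∩ X).Nonempty),
            Eu q hq_comm τ Φ‖ *
          (‖W X‖ * ‖∑ σ ∈ Finset.univ.filter (fun σ => σ \ X = ρ ∧ (σ ∩ X).Nonempty),
            Eu q hq_comm σ Ψ‖) :=
          mul_le_mul_of_nonneg_left ((W X).le_opNorm _) (norm_nonneg _)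
      _ = ‖W X‖ *
          (‖∑ τ ∈ Finset.univ.filter (fun τ => τ \ X = ρ ∧ (τ ∩ X).Nonempty),
            Eu q hq_comm τ Φ‖ *
           ‖∑ σ ∈ Finset.univ.filter (fun σ => σ \ X = ρ ∧ (σ ∩ X).Nonempty),
            Eu q hq_comm σ Ψ‖) := by ring
  -- step 3: AM-GM and the combinatorial estimates, for every μ > 0
  have hmain : ∀ μ : ℝ, 0 < μ → ‖(⟪Φ, (∑ X ∈ 𝒳, W X) Ψ⟫ : ℂ)‖
      ≤ μ/2 * ‖Φ‖^2 + 1/(2*μ) * (g * ‖(∑ x : Λ, q x) Ψ‖)^2 := by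
    intro μ hμ
    refine le_trans step2 ?_
    have hnum := numeric_bound 𝒳 h𝒳 W g hgpos hg
      (fun τ => ‖Eu q hq_comm τ Φ‖) (fun σ => ‖Eu q hq_comm σ Ψ‖)
      (fun X ρ => ‖∑ τ ∈ Finset.univ.filter (fun τ => τ \ X = ρ ∧ (τ ∩ X).Nonempty),
        Eu q hq_comm τ Φ‖)
      (fun X ρ => ‖∑ σ ∈ Finset.univ.filter (fun σ => σ \ X = ρ ∧ (σ ∩ X).Nonempty),
        Eu q hq_comm σ Ψ‖)
      hu2 hv2 μ hμ
    refine le_trans hnum ?_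
    rw [hNorm2Phi, ← hNpsi, mul_pow]
  exact opt_bound (norm_nonneg Φ) (by positivity) hmain

end RelBoundAux

open RelBoundAux in
/-- Operator-theoretic core of Lemma 5.2: if the local interactions
`W_X` annihilate the local ground-state projections `P_X = ∏_{x∈X}(1 − q_x)` from both
sides, commute with the `q_y` for `y ∉ X`, and are locally bounded by `g`
(`Σ_{X ∋ x} |X|·‖W_X‖ ≤ g` for every `x`), then `‖WΨ‖ ≤ g·‖NΨ‖` where
`W = Σ_X W_X` and `N = Σ_x q_x`. -/
theorem relative_bound_of_local_interactions
    {H : Type*} [NormedAddCommGroup H] [InnerProductSpace ℂ H] [CompleteSpace H]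
    {Λ : Type*} [Fintype Λ] [DecidableEq Λ]
    (q : Λ → H →L[ℂ] H)
    (hq_sa : ∀ x, IsSelfAdjoint (q x))
    (hq_idem : ∀ x, q x * q x = q x)
    (hq_comm : ∀ x y, Commute (q x) (q y))
    (𝒳 : Finset (Finset Λ)) (h𝒳 : ∀ X ∈ 𝒳, X.Nonempty)
    (W : Finset Λ → H →L[ℂ] H)
    (hW_sa : ∀ X ∈ 𝒳, IsSelfAdjoint (W X))
    (hW_comm : ∀ X ∈ 𝒳, ∀ y, y ∉ X → Commute (W X) (q y))
    (hWP : ∀ X ∈ 𝒳, W X * groundProjection q hq_comm X = 0 ∧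
      groundProjection q hq_comm X * W X = 0)
    (g : ℝ) (hg₀ : 0 ≤ g)
    (hg : ∀ x : Λ, ∑ X ∈ 𝒳.filter (fun X => x ∈ X), (X.card : ℝ) * ‖W X‖ ≤ g) :
    ∀ Ψ : H, ‖(∑ X ∈ 𝒳, W X) Ψ‖ ≤ g * ‖(∑ x : Λ, q x) Ψ‖ := by

  intro Ψ
  rcases hg₀.eq_or_lt with hg0 | hgpos
  · -- g = 0: all the interactions vanish
    have hWzero : ∀ X ∈ 𝒳, W X = 0 := by
      intro X hX
      obtain ⟨x, hx⟩ := h𝒳 X hX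
      have hsum := hg x
      rw [← hg0] at hsum
      have hnn : ∀ Y ∈ 𝒳.filter (fun Y => x ∈ Y), (0:ℝ) ≤ (Y.card : ℝ) * ‖W Y‖ := by
        intro Y _
        positivity
      have hzero := (Finset.sum_eq_zero_iff_of_nonneg hnn).mp
        (le_antisymm hsum (Finset.sum_nonneg hnn))
      have hXmem : X ∈ 𝒳.filter (fun Y => x ∈ Y) := Finset.mem_filter.mpr ⟨hX, hx⟩
      have hprod := hzero X hXmem
      have hcard : (0:ℝ) < (X.card:ℝ) := by exact_mod_cast Finset.card_pos.mpr (h𝒳 X hX)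
      have hnorm : ‖W X‖ = 0 := by
        rcases mul_eq_zero.mp hprod with h | h
        · exact absurd h (ne_of_gt hcard)
        · exact h
      exact norm_eq_zero.mp hnorm
    rw [Finset.sum_eq_zero hWzero, ← hg0]
    simp
  · -- g > 0: use the key bound with Φ = W Ψ
    set v := (∑ X ∈ 𝒳, W X) Ψ with hv
    have hkey := key_bound q hq_sa hq_idem hq_comm 𝒳 h𝒳 W hW_comm hWP g hgpos hg Ψ v
    have hself : (@inner ℂ _ _ v ((∑ X ∈ 𝒳, W X) Ψ) : ℂ) = (‖v‖:ℂ)^2 := by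
      rw [← hv]
      exact inner_self_eq_norm_sq_to_K v
    rw [hself] at hkey
    have hnorm : ‖((‖v‖:ℂ))^2‖ = ‖v‖^2 := by
      rw [norm_pow]
      simp
    rw [hnorm] at hkey
    rcases (norm_nonneg v).eq_or_lt with h0 | hpos
    · rw [← h0]
      positivity
    · have h2 : ‖v‖ * ‖v‖ ≤ ‖v‖ * (g * ‖(∑ x : Λ, q x) Ψ‖) := by
        calc ‖v‖ * ‖v‖ = ‖v‖^2 := by ring
          _ ≤ ‖v‖ * (g * ‖(∑ x : Λ, q x) Ψ‖) := hkey
      exact le_of_mul_le_mul_left h2 hpos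
end

section
/- Let n be a nonempty finite type and let A be an invertible n×n complex matrix that is self-adjoint (Aᴴ = A) and antisymmetric (Aᵀ = −A). Let |A| := √(AᴴA) be the positive semidefinite square root of AᴴA (which is invertible since A is invertible), and define the sign matrix S := A·|A|⁻¹. Then S is antisymmetric: Sᵀ = −S. -/
open Matrix
open scoped ComplexOrder

/-- The positive semidefinite square root of a positive semidefinite matrix, as defined in
Mathlib (December 2024) under the name `Matrix.PosSemidef.sqrt` (since removed). -/
noncomputable def Matrix.PosSemidef.sqrt {𝕜 : Type*} [RCLike 𝕜] {n : Type*} [Fintype n]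
    [DecidableEq n] {A : Matrix n n 𝕜} (hA : A.PosSemidef) : Matrix n n 𝕜 :=
  (hA.1.eigenvectorUnitary : Matrix n n 𝕜) *
    diagonal (((↑) : ℝ → 𝕜) ∘ (√·) ∘ hA.1.eigenvalues) *
    (star hA.1.eigenvectorUnitary : Matrix n n 𝕜)

section SqrtHelpers
open scoped MatrixOrder

theorem Matrix.PosSemidef.sqrt_eq_cfcSqrt_aux {n : Type*} [Fintype n] [DecidableEq n]
    {A : Matrix n n ℂ} (hA : A.PosSemidef) : hA.sqrt = CFC.sqrt A := by
  rw [CFC.sqrt_eq_real_sqrt A hA.nonneg, cfcₙ_eq_cfc, hA.1.cfc_eq, IsHermitian.cfc, Unitary.conjStarAlgAut_apply]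
  rfl

theorem Matrix.PosSemidef.posSemidef_sqrt {n : Type*} [Fintype n] [DecidableEq n]
    {A : Matrix n n ℂ} (hA : A.PosSemidef) : hA.sqrt.PosSemidef := by
  rw [hA.sqrt_eq_cfcSqrt_aux]
  exact (CFC.sqrt_nonneg A).posSemidef

theorem Matrix.PosSemidef.sqrt_mul_self {n : Type*} [Fintype n] [DecidableEq n]
    {A : Matrix n n ℂ} (hA : A.PosSemidef) : hA.sqrt * hA.sqrt = A := by
  rw [hA.sqrt_eq_cfcSqrt_aux]
  exact CFC.sqrt_mul_sqrt_self A hA.nonneg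

theorem Matrix.PosSemidef.eq_of_sq_eq_sq {n : Type*} [Fintype n] [DecidableEq n]
    {A B : Matrix n n ℂ} (hA : A.PosSemidef) (hB : B.PosSemidef) (h : A ^ 2 = B ^ 2) :
    A = B := by
  rw [← CFC.sqrt_sq A hA.nonneg, ← CFC.sqrt_sq B hB.nonneg, h]

end SqrtHelpers

/-- Second part of the Lemma in Section 3.3: for an invertible
self-adjoint antisymmetric complex matrix `A`, the positive square root
`|A| = √(AᴴA)` is invertible and the sign matrix `S = A·|A|⁻¹` is antisymmetric. -/
theorem sign_of_selfAdjoint_antisymmetric_is_antisymmetric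
    {n : Type*} [Fintype n] [DecidableEq n] [Nonempty n]
    (A : Matrix n n ℂ) (hinv : IsUnit A) (hH : Aᴴ = A) (hT : Aᵀ = -A) :
    IsUnit (Matrix.posSemidef_conjTranspose_mul_self A).sqrt ∧
      (A * ((Matrix.posSemidef_conjTranspose_mul_self A).sqrt)⁻¹)ᵀ =
        -(A * ((Matrix.posSemidef_conjTranspose_mul_self A).sqrt)⁻¹) := by
  have hP := Matrix.posSemidef_conjTranspose_mul_self A
  set B := hP.sqrt with hBdef
  have hB : B.PosSemidef := hP.posSemidef_sqrt
  have hdetA : IsUnit A.det := (Matrix.isUnit_iff_isUnit_det A).mp hinv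
  have hAinv : A * A⁻¹ = 1 := Matrix.mul_nonsing_inv A hdetA
  have hAinv' : A⁻¹ * A = 1 := Matrix.nonsing_inv_mul A hdetA
  have hB2 : B * B = A * A := by
    rw [hBdef, hP.sqrt_mul_self, hH]
  -- B is invertible
  have hBunit : IsUnit B := by
    rw [Matrix.isUnit_iff_isUnit_det]
    have : IsUnit (B.det * B.det) := by
      rw [← Matrix.det_mul, hB2, Matrix.det_mul]
      exact hdetA.mul hdetA
    exact isUnit_of_mul_isUnit_left this
  have hdetB : IsUnit B.det := (Matrix.isUnit_iff_isUnit_det B).mp hBunit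
  have hBinv : B * B⁻¹ = 1 := Matrix.mul_nonsing_inv B hdetB
  have hBinv' : B⁻¹ * B = 1 := Matrix.nonsing_inv_mul B hdetB
  -- B commutes with A² = B²
  have hcommB2 : B * (A * A) = (A * A) * B := by
    rw [← hB2, mul_assoc]
  -- A⁻¹ is Hermitian
  have hAinvH : A⁻¹ᴴ = A⁻¹ := by
    rw [Matrix.conjTranspose_nonsing_inv, hH]
  -- C := A * B * A⁻¹ is PosSemidef
  have hC3 : A⁻¹ * (B * B * B) * A⁻¹ᴴ = A * B * A⁻¹ := by
    rw [hAinvH, hB2]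
    have h1 : A⁻¹ * (A * A * B) * A⁻¹ = (A⁻¹ * A) * (A * B * A⁻¹) := by
      simp only [mul_assoc]
    rw [h1, hAinv', one_mul]
  have hCpsd : (A * B * A⁻¹).PosSemidef := by
    have h3 : (B * B * B).PosSemidef := by
      have := hB.pow 3
      rwa [pow_succ, pow_two] at this
    have := h3.mul_mul_conjTranspose_same A⁻¹
    rwa [hC3] at this
  -- C² = B²
  have hCsq : (A * B * A⁻¹) ^ 2 = B ^ 2 := by
    rw [pow_two, pow_two]
    have h1 : A * B * A⁻¹ * (A * B * A⁻¹) = A * (B * ((A⁻¹ * A) * (B * A⁻¹))) := by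
      simp only [mul_assoc]
    rw [h1, hAinv', one_mul, show A * (B * (B * A⁻¹)) = (B * B) * (B * A⁻¹) * 0 + A * (B * B) * A⁻¹ by simp only [mul_assoc, mul_zero, zero_add], mul_zero, zero_add, hB2, show A * (A * A) * A⁻¹ = A * A * (A * A⁻¹) by simp only [mul_assoc], hAinv, mul_one]
  have hCeqB : A * B * A⁻¹ = B := hCpsd.eq_of_sq_eq_sq hB hCsq
  have hcomm : A * B = B * A := by
    have h := congrArg (fun X => X * A) hCeqB
    simp only [mul_assoc, hAinv', mul_one] at h
    simpa only [mul_assoc] using h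
  -- Bᵀ = B
  have hBT : Bᵀ = B := by
    refine (hB.transpose).eq_of_sq_eq_sq hB ?_
    rw [pow_two, pow_two, ← Matrix.transpose_mul, hB2, Matrix.transpose_mul, hT,
      neg_mul_neg]
  -- inverses commute
  have hcommInv : A * B⁻¹ = B⁻¹ * A := by
    have h := congrArg (fun X => B⁻¹ * X * B⁻¹) hcomm
    simp only [mul_assoc] at h
    rw [hBinv, mul_one, ← mul_assoc, hBinv', one_mul] at h
    exact h.symm
  refine ⟨hBunit, ?_⟩
  rw [Matrix.transpose_mul, Matrix.transpose_nonsing_inv, hBT, hT]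
  rw [mul_neg, hcommInv]
end

section
/- Let n be a nonempty finite type and let T be an n×n complex Hermitian matrix (Tᴴ = T). Set Re T := (T + Tᵀ)/2, Im T := (T − Tᵀ)/(2i), and A := i·fromBlocks (Im T) (Re T) (−(Re T)) (Im T). Then the spectrum of A over ℂ equals σ(T) ∪ (−σ(T)). In particular, if ΔE > 0 and every element λ of σ(T) satisfies |λ| ≥ ΔE, then every element μ of σ(A) satisfies |μ| ≥ ΔE (the matrix A has the same spectral gap at zero energy as T). -/
open Matrix

/-- The entrywise real part `(T + Tᵀ)/2` of a Hermitian matrix `T`. -/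
noncomputable def matrixRealPart {n : Type*} [Fintype n] (T : Matrix n n ℂ) :
    Matrix n n ℂ := (2 : ℂ)⁻¹ • (T + Tᵀ)

/-- The entrywise imaginary part `(T − Tᵀ)/(2i)` of a Hermitian matrix `T`. -/
noncomputable def matrixImagPart {n : Type*} [Fintype n] (T : Matrix n n ℂ) :
    Matrix n n ℂ := (2 * Complex.I)⁻¹ • (T - Tᵀ)

/-- The Majorana one-particle matrix `A = i·[[Im T, Re T], [−Re T, Im T]]`. -/
noncomputable def majoranaMatrix {n : Type*} [Fintype n] (T : Matrix n n ℂ) :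
    Matrix (n ⊕ n) (n ⊕ n) ℂ :=
  Complex.I • Matrix.fromBlocks (matrixImagPart T) (matrixRealPart T)
    (-(matrixRealPart T)) (matrixImagPart T)

section aux

variable {n : Type*} [Fintype n] [DecidableEq n] (T : Matrix n n ℂ)

/-- The similarity transformation `S = [[1, 1], [i, −i]]`. -/
noncomputable def mjS : Matrix (n ⊕ n) (n ⊕ n) ℂ :=
  fromBlocks 1 1 (Complex.I • 1) (-(Complex.I • 1))

/-- The inverse `S⁻¹ = (1/2)·[[1, −i], [1, i]]`. -/
noncomputable def mjSinv : Matrix (n ⊕ n) (n ⊕ n) ℂ :=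
  (2:ℂ)⁻¹ • fromBlocks 1 (-(Complex.I • 1)) 1 (Complex.I • 1)

lemma mjS_mul_mjSinv : mjS (n := n) * mjSinv = 1 := by
  rw [mjS, mjSinv, Matrix.mul_smul, fromBlocks_multiply]
  simp only [Matrix.mul_one, Matrix.one_mul, Matrix.mul_neg, Matrix.neg_mul, neg_neg,
    Matrix.smul_mul, Matrix.mul_smul, smul_smul, Complex.I_mul_I, neg_smul, one_smul,
    add_neg_cancel, neg_add_cancel, one_mul]
  rw [← fromBlocks_one (l := n) (m := n)]
  ext (i|i) (j|j) <;> simp [fromBlocks, Matrix.one_apply] <;> split <;> norm_num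

lemma majorana_mul_mjS : majoranaMatrix T * mjS = mjS * fromBlocks (-Tᵀ) 0 0 T := by
  rw [majoranaMatrix, mjS, Matrix.smul_mul, fromBlocks_multiply, fromBlocks_multiply,
    matrixRealPart, matrixImagPart]
  simp only [Matrix.mul_one, Matrix.one_mul, Matrix.mul_zero, Matrix.zero_mul, Matrix.mul_neg,
    Matrix.neg_mul, Matrix.mul_smul, Matrix.smul_mul, smul_smul, add_zero, zero_add, mul_one]
  ext (i|i) (j|j) <;>
    simp [fromBlocks, Matrix.smul_apply, Matrix.sub_apply, Matrix.add_apply, Matrix.neg_apply,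
      smul_smul] <;>
    field_simp <;> ring_nf <;> simp [Complex.I_sq] <;> ring

lemma majorana_conj :
    majoranaMatrix T = mjS * fromBlocks (-Tᵀ) 0 0 T * mjSinv := by
  calc majoranaMatrix T = majoranaMatrix T * (mjS * mjSinv) := by
        rw [mjS_mul_mjSinv, mul_one]
    _ = (majoranaMatrix T * mjS) * mjSinv := by rw [mul_assoc]
    _ = _ := by rw [majorana_mul_mjS]

lemma spectrum_mem_iff_det {m : Type*} [Fintype m] [DecidableEq m]
    (M : Matrix m m ℂ) (z : ℂ) :
    z ∈ spectrum ℂ M ↔ (z • (1 : Matrix m m ℂ) - M).det = 0 := by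
  rw [spectrum.mem_iff, Algebra.algebraMap_eq_smul_one]
  constructor
  · intro h
    by_contra hd
    exact h ((Matrix.isUnit_iff_isUnit_det _).2 (isUnit_iff_ne_zero.2 hd))
  · intro h hu
    exact (isUnit_iff_ne_zero.1 ((Matrix.isUnit_iff_isUnit_det _).1 hu)) h

end aux

/-- The Majorana one-particle matrix `A` has spectrum
`σ(T) ∪ (−σ(T))`; in particular a spectral gap `|λ| ≥ ΔE` of `T` at zero energy
gives the same spectral gap of `A` at zero energy (Section 3.2). -/
theorem majoranaMatrix_spectrum_and_gap
    {n : Type*} [Fintype n] [DecidableEq n] [Nonempty n]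
    (T : Matrix n n ℂ) (hT : Tᴴ = T) :
    spectrum ℂ (majoranaMatrix T) = spectrum ℂ T ∪ (Neg.neg '' spectrum ℂ T) ∧
      ∀ ΔE : ℝ, 0 < ΔE → (∀ lam ∈ spectrum ℂ T, ΔE ≤ ‖lam‖) →
        ∀ μ ∈ spectrum ℂ (majoranaMatrix T), ΔE ≤ ‖μ‖ := by
  have hdetS : (mjS (n := n)).det * (mjSinv (n := n)).det = 1 := by
    rw [← det_mul, mjS_mul_mjSinv, det_one]
  have heq : ∀ z : ℂ, z • (1 : Matrix n n ℂ) - (-Tᵀ) = -(((-z) • 1 - T)ᵀ) := by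
    intro z; ext i j
    simp [Matrix.one_apply, Matrix.transpose_apply]
    split <;> ring
  have hdtn : ∀ z : ℂ, ((z • (1 : Matrix n n ℂ) - (-Tᵀ)).det = 0
      ↔ ((-z) • (1 : Matrix n n ℂ) - T).det = 0) := by
    intro z
    rw [heq z, det_neg, det_transpose, mul_eq_zero]
    simp
  have key : spectrum ℂ (majoranaMatrix T) = spectrum ℂ T ∪ (Neg.neg '' spectrum ℂ T) := by
    ext z
    rw [spectrum_mem_iff_det, majorana_conj]
    have hc : mjS * ((z • (1 : Matrix (n ⊕ n) (n ⊕ n) ℂ)) - fromBlocks (-Tᵀ) 0 0 T) * mjSinv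
        = z • (1 : Matrix (n ⊕ n) (n ⊕ n) ℂ) - mjS * fromBlocks (-Tᵀ) 0 0 T * mjSinv := by
      rw [Matrix.mul_sub, Matrix.sub_mul, Matrix.mul_smul, mul_one, Matrix.smul_mul,
        mjS_mul_mjSinv]
    rw [← hc, det_mul, det_mul]
    have hz : ((mjS (n := n)).det *
        (z • (1 : Matrix (n ⊕ n) (n ⊕ n) ℂ) - fromBlocks (-Tᵀ) 0 0 T).det *
        (mjSinv (n := n)).det = 0)
        ↔ (z • (1 : Matrix (n ⊕ n) (n ⊕ n) ℂ) - fromBlocks (-Tᵀ) 0 0 T).det = 0 := by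
      constructor
      · intro h
        rcases mul_eq_zero.1 h with h | h
        · rcases mul_eq_zero.1 h with h | h
          · exact absurd hdetS (by rw [h, zero_mul]; exact zero_ne_one)
          · exact h
        · exact absurd hdetS (by rw [h, mul_zero]; exact zero_ne_one)
      · intro h; rw [h, mul_zero, zero_mul]
    rw [hz]
    have hblock : z • (1 : Matrix (n ⊕ n) (n ⊕ n) ℂ) - fromBlocks (-Tᵀ) 0 0 T
        = fromBlocks (z • 1 - (-Tᵀ)) 0 0 (z • 1 - T) := by
      rw [← fromBlocks_one (l := n) (m := n)]
      ext (i|i) (j|j) <;> simp [fromBlocks]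
    rw [hblock, det_fromBlocks_zero₂₁, mul_eq_zero]
    constructor
    · rintro (h | h)
      · right
        exact ⟨-z, (spectrum_mem_iff_det T (-z)).2 ((hdtn z).1 h), neg_neg z⟩
      · left; exact (spectrum_mem_iff_det T z).2 h
    · rintro (h | ⟨w, hw, rfl⟩)
      · right; exact (spectrum_mem_iff_det T z).1 h
      · left
        refine (hdtn (-w)).2 ?_
        rw [neg_neg]
        exact (spectrum_mem_iff_det T w).1 hw
  refine ⟨key, ?_⟩
  intro ΔE hΔE hgap μ hμ
  rw [key] at hμ
  rcases hμ with h | ⟨w, hw, rfl⟩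
  · exact hgap μ h
  · rw [norm_neg]; exact hgap w hw
end

section
/- Let n be a nonempty finite type, let H be an n×n complex Hermitian matrix, and let B be an arbitrary n×n complex matrix. Let γ > 0 and let w : ℝ → ℂ be an integrable function such that ∫_ℝ w(t)·exp(i t ω) dt = 0 for every real ω with |ω| ≥ γ. Suppose φ and ψ are vectors in ℂⁿ with H·φ = E₀·φ and H·ψ = λ·ψ for real numbers E₀ and λ satisfying |λ − E₀| ≥ γ. Then ⟨ψ, (∫_ℝ w(t)·exp(itH)·B·exp(−itH) dt)·φ⟩ = 0, where exp denotes the matrix exponential and the integral is the Bochner integral (the integrand is integrable since exp(itH) is unitary for Hermitian H). -/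
open Matrix MeasureTheory

attribute [local instance] Matrix.normedAddCommGroup Matrix.normedSpace

section Aux

attribute [local instance] Matrix.linftyOpNormedAddCommGroup Matrix.linftyOpNormedRing
  Matrix.linftyOpNormedAlgebra

open NormedSpace in
lemma exp_mulVec_eigen {n : Type*} [Fintype n] [DecidableEq n]
    (M : Matrix n n ℂ) (φ : n → ℂ) (c : ℂ) (h : M.mulVec φ = c • φ) :
    (NormedSpace.exp M).mulVec φ = Complex.exp c • φ := by
  have hpow : ∀ k : ℕ, (M ^ k).mulVec φ = (c ^ k) • φ := by
    intro k
    induction k with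
    | zero => simp
    | succ k ih =>
        rw [pow_succ, ← Matrix.mulVec_mulVec, h, Matrix.mulVec_smul, ih, smul_smul, pow_succ,
          mul_comm]
  let L : Matrix n n ℂ →ₗ[ℂ] (n → ℂ) :=
    { toFun := fun A => A.mulVec φ
      map_add' := fun A B' => Matrix.add_mulVec A B' φ
      map_smul' := fun r A => (Matrix.smul_mulVec r A φ) }
  let L' : Matrix n n ℂ →L[ℂ] (n → ℂ) := LinearMap.toContinuousLinearMap L
  have hs : Summable fun k : ℕ => ((k.factorial : ℂ)⁻¹) • M ^ k :=
    NormedSpace.expSeries_summable' (𝕂 := ℂ) M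
  have : (NormedSpace.exp M).mulVec φ
      = ∑' k : ℕ, L' (((k.factorial : ℂ)⁻¹) • M ^ k) := by
    rw [NormedSpace.exp_eq_tsum (𝕂 := ℂ)]
    exact (L'.map_tsum hs).symm ▸ rfl
  rw [this]
  have h2 : ∀ k : ℕ, L' (((k.factorial : ℂ)⁻¹) • M ^ k)
      = (((k.factorial : ℂ)⁻¹) * c ^ k) • φ := by
    intro k
    show ((((k.factorial : ℂ)⁻¹) • M ^ k)).mulVec φ = _
    rw [Matrix.smul_mulVec, hpow, smul_smul]
  simp_rw [h2]
  have hc : Summable fun k : ℕ => ((k.factorial : ℂ)⁻¹) * c ^ k := by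
    simpa [smul_eq_mul] using NormedSpace.expSeries_summable' (𝕂 := ℂ) c
  rw [hc.tsum_smul_const, Complex.exp_eq_exp_ℂ, NormedSpace.exp_eq_tsum (𝕂 := ℂ)]
  simp [smul_eq_mul]

end Aux

/-- Spectral-filtering mechanism (localGScondition) of Section 4:
the quasi-adiabatic operator `ℛ(B) = ∫ w(t) e^{itH} B e^{−itH} dt`, built from a
weight whose Fourier transform vanishes outside `(−γ, γ)`, has vanishing matrix
elements between eigenvectors of `H` whose eigenvalues differ by at least `γ`. -/
theorem quasiAdiabatic_filter_vanishing_matrix_element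
    {n : Type*} [Fintype n] [DecidableEq n] [Nonempty n]
    (Hm : Matrix n n ℂ) (hH : Hmᴴ = Hm) (B : Matrix n n ℂ)
    (γ : ℝ) (hγ : 0 < γ)
    (w : ℝ → ℂ) (hw : MeasureTheory.Integrable w)
    (hFourier : ∀ ω : ℝ, γ ≤ |ω| →
      (∫ t : ℝ, w t * Complex.exp (Complex.I * t * ω)) = 0)
    (φ ψ : n → ℂ) (E₀ lam : ℝ)
    (hφ : Hm.mulVec φ = (E₀ : ℂ) • φ) (hψ : Hm.mulVec ψ = (lam : ℂ) • ψ)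
    (hgap : γ ≤ |lam - E₀|) :
    dotProduct (star ψ)
      ((∫ t : ℝ, w t • (NormedSpace.exp ((Complex.I * t) • Hm) * B *
          NormedSpace.exp ((-(Complex.I * t)) • Hm))).mulVec φ) = 0 := by
  set f : ℝ → Matrix n n ℂ := fun t =>
    w t • (NormedSpace.exp ((Complex.I * t) • Hm) * B *
      NormedSpace.exp ((-(Complex.I * t)) • Hm)) with hf
  letI : ContinuousENorm (Matrix n n ℂ) := SeminormedAddGroup.toContinuousENorm
  by_cases hInt : Integrable f
  · -- the continuous linear functional M ↦ ⟨ψ, M φ⟩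
    let L : Matrix n n ℂ →ₗ[ℂ] ℂ :=
      { toFun := fun M => dotProduct (star ψ) (M.mulVec φ)
        map_add' := fun A B' => by
          simp [Matrix.add_mulVec, dotProduct_add]
        map_smul' := fun r A => by
          simp [Matrix.smul_mulVec, dotProduct_smul] }
    let L' : Matrix n n ℂ →L[ℂ] ℂ := LinearMap.toContinuousLinearMap L
    have key : dotProduct (star ψ) ((∫ t : ℝ, f t).mulVec φ)
        = ∫ t : ℝ, L' (f t) := by
      exact (L'.integral_comp_comm hInt).symm
    rw [key]
    -- pointwise computation
    have hpt : ∀ t : ℝ, L' (f t)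
        = (w t * Complex.exp (Complex.I * t * ((lam - E₀ : ℝ) : ℂ))) *
            dotProduct (star ψ) (B.mulVec φ) := by
      intro t
      have hA : (NormedSpace.exp ((-(Complex.I * t)) • Hm)).mulVec φ
          = Complex.exp ((-(Complex.I * t)) * E₀) • φ := by
        apply exp_mulVec_eigen
        rw [Matrix.smul_mulVec, hφ, smul_smul]
      have hAψ : (NormedSpace.exp ((-(Complex.I * t)) • Hm)).mulVec ψ
          = Complex.exp ((-(Complex.I * t)) * lam) • ψ := by
        apply exp_mulVec_eigen
        rw [Matrix.smul_mulVec, hψ, smul_smul]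
      have hconj : (NormedSpace.exp ((Complex.I * (t : ℂ)) • Hm))ᴴ
          = NormedSpace.exp ((-(Complex.I * t)) • Hm) := by
        rw [← Matrix.exp_conjTranspose]
        congr 1
        rw [Matrix.conjTranspose_smul, hH]
        congr 1
        simp [Complex.ext_iff]
      have hvec : Matrix.vecMul (star ψ) (NormedSpace.exp ((Complex.I * (t : ℂ)) • Hm))
          = Complex.exp (Complex.I * t * lam) • star ψ := by
        have := Matrix.star_mulVec (M := (NormedSpace.exp ((Complex.I * (t : ℂ)) • Hm))ᴴ)
          (v := ψ)
        rw [Matrix.conjTranspose_conjTranspose, hconj, hAψ] at this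
        rw [← this, star_smul]
        congr 1
        rw [Complex.star_def, ← Complex.exp_conj]
        congr 1
        simp only [_root_.map_mul, map_neg, Complex.conj_I, Complex.conj_ofReal]
        ring
      show dotProduct (star ψ) ((f t).mulVec φ) = _
      rw [hf]
      simp only [Matrix.smul_mulVec, dotProduct_smul]
      rw [Matrix.mul_assoc, ← Matrix.mulVec_mulVec, Matrix.dotProduct_mulVec, hvec,
        ← Matrix.mulVec_mulVec, hA, Matrix.mulVec_smul, smul_dotProduct,
        dotProduct_smul]
      rw [smul_eq_mul, smul_eq_mul, smul_eq_mul]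
      have he : Complex.exp (Complex.I * t * lam) * Complex.exp (-(Complex.I * t) * E₀)
          = Complex.exp (Complex.I * t * ((lam - E₀ : ℝ) : ℂ)) := by
        rw [← Complex.exp_add]; congr 1; push_cast; ring
      rw [← mul_assoc (Complex.exp (Complex.I * (t:ℂ) * (lam:ℂ))), he]
      exact (mul_assoc _ _ _).symm
    simp_rw [hpt]
    rw [integral_mul_const, hFourier _ hgap, zero_mul]
  · rw [integral_undef hInt]
    simp
end

section
/- Let n be a nonempty finite type and let H be an n×n complex Hermitian matrix with a unit eigenvector Φ₀, H·Φ₀ = E₀·Φ₀, such that the E₀-eigenspace of H is one-dimensional and every eigenvalue λ of H satisfies λ = E₀ or |λ − E₀| ≥ γ, where γ > 0. Let w : ℝ → ℂ be an integrable function with ∫_ℝ w(t) dt = 1 and ∫_ℝ w(t)·exp(i t ω) dt = 0 for every real ω with |ω| ≥ γ. Then for every n×n complex matrix B, (∫_ℝ w(t)·exp(itH)·B·exp(−itH) dt)·Φ₀ = ⟨Φ₀, B·Φ₀⟩·Φ₀; equivalently, writing :B: := B − ⟨Φ₀, BΦ₀⟩·1, one has (∫_ℝ w(t)·exp(itH)·(:B:)·exp(−itH)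 dt)·Φ₀ = 0. -/
open Matrix MeasureTheory

attribute [local instance] Matrix.normedAddCommGroup Matrix.normedSpace

/-- Property (RUVZUP0) of Section 4: for a Hamiltonian `H` with
nondegenerate ground state `Φ₀` (eigenvalue `E₀`) and spectral gap `γ`, the
quasi-adiabatic filtering `ℛ(·) = ∫ w(t) e^{itH}(·)e^{−itH} dt` (with `ŵ(0) = 1`
and `ŵ(ω) = 0` for `|ω| ≥ γ`) maps `B` to an operator acting on `Φ₀` as the scalar
`⟨Φ₀, BΦ₀⟩`; equivalently, `ℛ(:B:)Φ₀ = 0` for `:B: = B − ⟨Φ₀, BΦ₀⟩·1`. -/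
theorem quasiAdiabatic_filter_ground_state
    {n : Type*} [Fintype n] [DecidableEq n] [Nonempty n]
    (Hm : Matrix n n ℂ) (hH : Hmᴴ = Hm)
    (γ : ℝ) (hγ : 0 < γ) (E₀ : ℝ) (Φ₀ : n → ℂ)
    (hΦ₀unit : dotProduct (star Φ₀) Φ₀ = 1)
    (hΦ₀eig : Hm.mulVec Φ₀ = (E₀ : ℂ) • Φ₀)
    (hnondeg : ∀ v : n → ℂ, Hm.mulVec v = (E₀ : ℂ) • v → ∃ c : ℂ, v = c • Φ₀)
    (hspec : ∀ μ ∈ spectrum ℂ Hm, μ = (E₀ : ℂ) ∨ γ ≤ ‖μ - (E₀ : ℂ)‖)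
    (w : ℝ → ℂ) (hw : MeasureTheory.Integrable w)
    (hw0 : (∫ t : ℝ, w t) = 1)
    (hFourier : ∀ ω : ℝ, γ ≤ |ω| →
      (∫ t : ℝ, w t * Complex.exp (Complex.I * t * ω)) = 0) :
    ∀ B : Matrix n n ℂ,
      (∫ t : ℝ, w t • (NormedSpace.exp ((Complex.I * t) • Hm) * B *
          NormedSpace.exp ((-(Complex.I * t)) • Hm))).mulVec Φ₀ =
        dotProduct (star Φ₀) (B.mulVec Φ₀) • Φ₀ ∧
      (∫ t : ℝ, w t • (NormedSpace.exp ((Complex.I * t) • Hm) *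
          (B - dotProduct (star Φ₀) (B.mulVec Φ₀) • 1) *
          NormedSpace.exp ((-(Complex.I * t)) • Hm))).mulVec Φ₀ = 0 := by
  classical
  have hherm : Hm.IsHermitian := hH
  set U : Matrix n n ℂ := (hherm.eigenvectorUnitary : Matrix n n ℂ) with hUdef
  set lam : n → ℝ := hherm.eigenvalues with hlamdef
  have hUU : star U * U = 1 :=
    Matrix.mem_unitaryGroup_iff'.mp hherm.eigenvectorUnitary.2
  have hUUr : U * star U = 1 :=
    Matrix.mem_unitaryGroup_iff.mp hherm.eigenvectorUnitary.2
  have hspec' : Hm = U * Matrix.diagonal (fun j => (lam j : ℂ)) * star U := by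
    exact hherm.spectral_theorem
  let Uu : (Matrix n n ℂ)ˣ := ⟨U, star U, hUUr, hUU⟩
  have hUunit : IsUnit U := ⟨Uu, rfl⟩
  have hUinv : U⁻¹ = star U := Matrix.inv_eq_right_inv hUUr
  -- exponential of z • Hm
  have hexp : ∀ z : ℂ, NormedSpace.exp (z • Hm)
      = U * Matrix.diagonal (fun j => Complex.exp (z * (lam j : ℂ))) * star U := by
    intro z
    have h1 : z • Hm = U * Matrix.diagonal (fun j => z * (lam j : ℂ)) * U⁻¹ := by
      have hd : (Matrix.diagonal fun j => z * (lam j : ℂ))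
          = z • Matrix.diagonal (fun j => (lam j : ℂ)) := by
        rw [← Matrix.diagonal_smul]
        rfl
      rw [hUinv, hspec', hd, mul_smul_comm, smul_mul_assoc]
    rw [h1, Matrix.exp_conj _ _ hUunit, Matrix.exp_diagonal, hUinv]
    congr 2
    rw [Pi.exp_def]
    funext j
    rw [← Complex.exp_eq_exp_ℂ]
  -- the key statement for all matrices B
  have key : ∀ B : Matrix n n ℂ,
      (∫ t : ℝ, w t • (NormedSpace.exp ((Complex.I * t) • Hm) * B *
          NormedSpace.exp ((-(Complex.I * t)) • Hm))).mulVec Φ₀ =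
        dotProduct (star Φ₀) (B.mulVec Φ₀) • Φ₀ := by
    intro B
    set C : Matrix n n ℂ := star U * B * U with hC
    set a : n → ℂ := (star U) *ᵥ Φ₀ with ha
    -- representation of the integrand as a finite sum
    have factor : ∀ (d e : n → ℂ),
        (U * Matrix.diagonal d * star U) * B * (U * Matrix.diagonal e * star U)
          = U * (Matrix.diagonal d * C * Matrix.diagonal e) * star U := by
      intro d e
      simp only [hC, Matrix.mul_assoc]
    have expand : ∀ (d e : n → ℂ), Matrix.diagonal d * C * Matrix.diagonal e
        = ∑ j : n, ∑ k : n, (d j * C j k * e k) • Matrix.single j k 1 := by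
      intro d e
      ext p q
      rw [Matrix.mul_diagonal, Matrix.diagonal_mul]
      simp [Matrix.sum_apply, Matrix.single, Matrix.of_apply, mul_ite, ite_and,
        Finset.sum_ite_eq, Finset.sum_ite_eq']
    have hrep : ∀ t : ℝ,
        w t • (NormedSpace.exp ((Complex.I * t) • Hm) * B *
          NormedSpace.exp ((-(Complex.I * t)) • Hm))
        = ∑ j : n, ∑ k : n,
            (w t * Complex.exp (Complex.I * t * ((lam j : ℂ) - (lam k : ℂ))) * C j k)
              • (U * Matrix.single j k 1 * star U) := by
      intro t
      rw [hexp, hexp, factor, expand]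
      simp only [Matrix.mul_sum, Matrix.sum_mul, mul_smul_comm, smul_mul_assoc,
        Finset.smul_sum, smul_smul]
      refine Finset.sum_congr rfl fun j _ => Finset.sum_congr rfl fun k _ => ?_
      congr 1
      rw [show Complex.I * t * ((lam j : ℂ) - (lam k : ℂ))
          = Complex.I * t * (lam j : ℂ) + -(Complex.I * t) * (lam k : ℂ) by ring,
        Complex.exp_add]
      ring
    -- integrability of the scalar coefficients
    have hintg : ∀ (j k : n), Integrable
        (fun t : ℝ => w t * Complex.exp (Complex.I * t * ((lam j : ℂ) - (lam k : ℂ)))) := by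
      intro j k
      have h1 : Integrable
          (fun t : ℝ => Complex.exp (Complex.I * t * ((lam j : ℂ) - (lam k : ℂ))) * w t) :=
        hw.bdd_mul (c := 1)
          (Continuous.aestronglyMeasurable (by fun_prop))
          (Filter.Eventually.of_forall fun t => by
            rw [Complex.norm_exp]
            have : (Complex.I * t * ((lam j : ℂ) - (lam k : ℂ))).re = 0 := by
              simp [Complex.mul_re, Complex.mul_im]
            rw [this, Real.exp_zero])
      simpa [mul_comm] using h1
    -- evaluate the integral
    have hInt : (∫ t : ℝ, w t • (NormedSpace.exp ((Complex.I * t) • Hm) * B *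
          NormedSpace.exp ((-(Complex.I * t)) • Hm)))
        = ∑ j : n, ∑ k : n,
            ((∫ t : ℝ, w t * Complex.exp (Complex.I * t * ((lam j : ℂ) - (lam k : ℂ)))) * C j k)
              • (U * Matrix.single j k 1 * star U) := by
      rw [integral_congr_ae (Filter.Eventually.of_forall hrep)]
      rw [integral_finset_sum _ (fun j _ => integrable_finset_sum _
        (fun k _ => ((hintg j k).mul_const (C j k)).smul_const _))]
      refine Finset.sum_congr rfl fun j _ => ?_
      rw [integral_finset_sum _ (fun k _ => ((hintg j k).mul_const (C j k)).smul_const _)]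
      refine Finset.sum_congr rfl fun k _ => ?_
      rw [integral_smul_const, integral_mul_const]
    -- action of the summand matrices on Φ₀
    have hEvec : ∀ j k : n, (U * Matrix.single j k 1 * star U) *ᵥ Φ₀
        = a k • (U *ᵥ (Pi.single j 1 : n → ℂ)) := by
      intro j k
      rw [← Matrix.mulVec_mulVec, ← Matrix.mulVec_mulVec, ← ha]
      have h2 : Matrix.single j k 1 *ᵥ a = a k • (Pi.single j 1 : n → ℂ) := by
        ext p
        simp [Matrix.mulVec, dotProduct, Matrix.single, Pi.single_apply,
          ite_mul, ite_and, Finset.sum_ite_eq, Finset.sum_ite_eq', eq_comm, mul_comm]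
      rw [h2, Matrix.mulVec_smul]
    -- columns of U are eigenvectors
    have hcol : ∀ j : n, Hm *ᵥ (U *ᵥ (Pi.single j 1 : n → ℂ))
        = (lam j : ℂ) • (U *ᵥ (Pi.single j 1 : n → ℂ)) := by
      intro j
      rw [Matrix.mulVec_mulVec, hspec', Matrix.mul_assoc (U * Matrix.diagonal _) (star U) U,
        hUU, mul_one, ← Matrix.mulVec_mulVec]
      have : Matrix.diagonal (fun j => (lam j : ℂ)) *ᵥ (Pi.single j 1 : n → ℂ)
          = (lam j : ℂ) • (Pi.single j 1 : n → ℂ) := by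
        ext i
        rw [Matrix.mulVec_diagonal]
        by_cases h : i = j <;> simp [Pi.single_apply, h]
      rw [this, Matrix.mulVec_smul]
    -- the chosen scalars for the E₀-eigencolumns
    have hex : ∀ j : n, lam j = E₀ → ∃ c : ℂ, U *ᵥ (Pi.single j 1 : n → ℂ) = c • Φ₀ := by
      intro j hj
      exact hnondeg _ (by rw [hcol j, hj])
    set c : n → ℂ := fun j => if h : lam j = E₀ then (hex j h).choose else 0 with hcdef
    have hc : ∀ j : n, lam j = E₀ → U *ᵥ (Pi.single j 1 : n → ℂ) = c j • Φ₀ := by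
      intro j hj
      simp only [hcdef, dif_pos hj]
      exact (hex j hj).choose_spec
    -- components of a vanish off the E₀-eigenspace
    have hak0 : ∀ k : n, lam k ≠ E₀ → a k = 0 := by
      intro k hk
      have hDa : Matrix.diagonal (fun j => (lam j : ℂ)) *ᵥ a = (E₀ : ℂ) • a := by
        have h1 : star U *ᵥ (Hm *ᵥ Φ₀) = star U *ᵥ ((E₀ : ℂ) • Φ₀) := by rw [hΦ₀eig]
        rw [Matrix.mulVec_smul, Matrix.mulVec_mulVec, hspec'] at h1
        rw [show star U * (U * Matrix.diagonal (fun j => (lam j : ℂ)) * star U)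
            = Matrix.diagonal (fun j => (lam j : ℂ)) * star U by
          rw [← Matrix.mul_assoc, ← Matrix.mul_assoc, hUU, one_mul]] at h1
        rw [← Matrix.mulVec_mulVec] at h1
        exact h1
      have h2 := congrFun hDa k
      simp only [Matrix.mulVec_diagonal, Pi.smul_apply, smul_eq_mul] at h2
      have h3 : ((lam k : ℂ) - (E₀ : ℂ)) * a k = 0 := by rw [sub_mul, h2]; ring
      rcases mul_eq_zero.mp h3 with h | h
      · exfalso; apply hk
        have := sub_eq_zero.mp h
        exact_mod_cast this
      · exact h
    -- the Fourier coefficient vanishes for off-gap frequencies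
    have hsp : spectrum ℂ Hm = Set.range (fun j => (lam j : ℂ)) := by
      rw [hspec']
      have h1 : spectrum ℂ ((Uu : Matrix n n ℂ) * Matrix.diagonal (fun j => (lam j : ℂ))
            * ((Uu⁻¹ : (Matrix n n ℂ)ˣ) : Matrix n n ℂ))
          = spectrum ℂ (Matrix.diagonal (fun j => (lam j : ℂ))) :=
        spectrum.units_conjugate
      rw [show ((Uu⁻¹ : (Matrix n n ℂ)ˣ) : Matrix n n ℂ) = star U from rfl] at h1
      rw [show ((Uu : Matrix n n ℂ)) = U from rfl] at h1
      rw [h1, spectrum_diagonal]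
    have hwjk0 : ∀ j : n, lam j ≠ E₀ →
        (∫ t : ℝ, w t * Complex.exp (Complex.I * t * ((lam j : ℂ) - (E₀ : ℂ)))) = 0 := by
      intro j hj
      have hmem : (lam j : ℂ) ∈ spectrum ℂ Hm := by rw [hsp]; exact ⟨j, rfl⟩
      have hgap : γ ≤ |lam j - E₀| := by
        rcases hspec _ hmem with h | h
        · exact absurd (by exact_mod_cast h) hj
        · rwa [show (lam j : ℂ) - (E₀ : ℂ) = ((lam j - E₀ : ℝ) : ℂ) by push_cast; ring,
            Complex.norm_real, Real.norm_eq_abs] at h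
      have := hFourier (lam j - E₀) hgap
      rw [show ((lam j : ℂ) - (E₀ : ℂ)) = ((lam j - E₀ : ℝ) : ℂ) by push_cast; ring]
      exact this
    -- assemble: apply the integral to Φ₀
    have hmv : (∑ j : n, ∑ k : n,
        ((∫ t : ℝ, w t * Complex.exp (Complex.I * t * ((lam j : ℂ) - (lam k : ℂ)))) * C j k)
          • (U * Matrix.single j k 1 * star U)) *ᵥ Φ₀
        = ∑ j : n, ∑ k : n,
          ((∫ t : ℝ, w t * Complex.exp (Complex.I * t * ((lam j : ℂ) - (lam k : ℂ)))) * C j k)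
            • ((U * Matrix.single j k 1 * star U) *ᵥ Φ₀) := by
      let L : Matrix n n ℂ →ₗ[ℂ] (n → ℂ) :=
        { toFun := fun M => M *ᵥ Φ₀
          map_add' := fun M N => Matrix.add_mulVec M N Φ₀
          map_smul' := fun r M => Matrix.smul_mulVec r M Φ₀ }
      have : ∀ (M : Matrix n n ℂ), M *ᵥ Φ₀ = L M := fun _ => rfl
      rw [this, map_sum]
      refine Finset.sum_congr rfl fun j _ => ?_
      rw [map_sum]
      refine Finset.sum_congr rfl fun k _ => ?_
      rw [_root_.map_smul]
      rfl
    -- per-term evaluation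
    have hterm : ∀ j k : n,
        ((∫ t : ℝ, w t * Complex.exp (Complex.I * t * ((lam j : ℂ) - (lam k : ℂ)))) * C j k)
          • ((U * Matrix.single j k 1 * star U) *ᵥ Φ₀)
        = ((if lam j = E₀ then c j else 0) * C j k * a k) • Φ₀ := by
      intro j k
      rw [hEvec j k]
      by_cases hk : lam k = E₀
      · by_cases hj : lam j = E₀
        · have h1 : (∫ t : ℝ, w t * Complex.exp (Complex.I * t * ((lam j : ℂ) - (lam k : ℂ))))
              = 1 := by
            rw [hj, hk]
            simpa using hw0
          rw [h1, hc j hj, if_pos hj]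
          rw [smul_smul, smul_smul]
          congr 1
          ring
        · have h1 : (∫ t : ℝ, w t * Complex.exp (Complex.I * t * ((lam j : ℂ) - (lam k : ℂ))))
              = 0 := by rw [hk]; exact hwjk0 j hj
          rw [h1, if_neg hj]
          simp
      · rw [hak0 k hk]
        simp
    -- scalar bookkeeping
    have hCa : C *ᵥ a = star U *ᵥ (B *ᵥ Φ₀) := by
      rw [ha, Matrix.mulVec_mulVec, Matrix.mulVec_mulVec, hC]
      congr 1
      rw [Matrix.mul_assoc (star U * B) U (star U), hUUr, mul_one]
    have haj : ∀ j : n, lam j = E₀ → a j = star (c j) := by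
      intro j hj
      have hUcol : ∀ p, U p j = c j * Φ₀ p := by
        intro p
        have := congrFun (hc j hj) p
        simpa [Matrix.mulVec_single] using this
      have : a j = ∑ p : n, star (U p j) * Φ₀ p := by
        simp [ha, Matrix.mulVec, dotProduct, Matrix.star_apply]
      rw [this]
      have h2 : ∀ p, star (U p j) * Φ₀ p = star (c j) * (star (Φ₀ p) * Φ₀ p) := by
        intro p; rw [hUcol p, star_mul']; ring
      rw [Finset.sum_congr rfl fun p _ => h2 p, ← Finset.mul_sum]
      have : ∑ p : n, star (Φ₀ p) * Φ₀ p = 1 := hΦ₀unit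
      rw [this, mul_one]
    have hbj : ∀ j : n, lam j = E₀ →
        (star U *ᵥ (B *ᵥ Φ₀)) j
          = star (c j) * dotProduct (star Φ₀) (B *ᵥ Φ₀) := by
      intro j hj
      have hUcol : ∀ p, U p j = c j * Φ₀ p := by
        intro p
        have := congrFun (hc j hj) p
        simpa [Matrix.mulVec_single] using this
      have h1 : (star U *ᵥ (B *ᵥ Φ₀)) j = ∑ p : n, star (U p j) * (B *ᵥ Φ₀) p := by
        simp [Matrix.mulVec, dotProduct, Matrix.star_apply]
      rw [h1]
      have h2 : ∀ p, star (U p j) * (B *ᵥ Φ₀) p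
          = star (c j) * (star (Φ₀ p) * (B *ᵥ Φ₀) p) := by
        intro p; rw [hUcol p, star_mul']; ring
      rw [Finset.sum_congr rfl fun p _ => h2 p, ← Finset.mul_sum]
      rfl
    have hnorma : dotProduct (star a) a = 1 := by
      have h1 : star a = Matrix.vecMul (star Φ₀) U := by
        rw [ha, Matrix.star_mulVec, Matrix.star_eq_conjTranspose,
          Matrix.conjTranspose_conjTranspose]
      rw [h1, ha, dotProduct_mulVec, Matrix.vecMul_vecMul, hUUr, Matrix.vecMul_one]
      exact hΦ₀unit
    -- final computation
    rw [hInt, hmv]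
    rw [Finset.sum_congr rfl fun j _ => Finset.sum_congr rfl fun k _ => hterm j k]
    simp_rw [← Finset.sum_smul]
    congr 1
    calc ∑ j : n, ∑ k : n, (if lam j = E₀ then c j else 0) * C j k * a k
        = ∑ j : n, (if lam j = E₀ then c j else 0) * (C *ᵥ a) j := by
          refine Finset.sum_congr rfl fun j _ => ?_
          simp [Matrix.mulVec, dotProduct, Finset.mul_sum, mul_assoc]
      _ = ∑ j : n, star (a j) * a j * dotProduct (star Φ₀) (B *ᵥ Φ₀) := by
          refine Finset.sum_congr rfl fun j _ => ?_
          by_cases hj : lam j = E₀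
          · rw [if_pos hj, hCa, hbj j hj, haj j hj, star_star]
            ring
          · rw [if_neg hj, hak0 j hj]
            simp
      _ = dotProduct (star a) a * dotProduct (star Φ₀) (B *ᵥ Φ₀) := by
          simp [dotProduct, Finset.sum_mul]
      _ = dotProduct (star Φ₀) (B *ᵥ Φ₀) := by rw [hnorma, one_mul]
  intro B
  refine ⟨key B, ?_⟩
  have h2 := key (B - dotProduct (star Φ₀) (B.mulVec Φ₀) • 1)
  have h3 : dotProduct (star Φ₀)
      ((B - dotProduct (star Φ₀) (B.mulVec Φ₀) • 1).mulVec Φ₀) = 0 := by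
    rw [Matrix.sub_mulVec, Matrix.smul_mulVec, Matrix.one_mulVec,
      dotProduct_sub, dotProduct_smul, hΦ₀unit]
    simp [hΦ₀unit]
  rw [h3, zero_smul] at h2
  exact h2
end
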